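/- arXiv:1905.01616 — 10 statements merged into one kernel-verified Lean document; each statement's English description precedes it below -/
import Mathlib

section
/- Let 0 < c < 1/3, K = (1-c^2)/c^2, ψ = arcsin(√(1-c^2))/√K, 0 < r ≤ π/(4√K) - ψ/2, Δ = √K(2r+ψ). If α > 1+2r satisfies cos Δ ≥ (c+1)/log(α/(1+2r)), then sin(Δ)/√K + (α-1-2r)·cos Δ + ((c+1)/(2·log(α/(1+2r))))·(α·log(α/(1+2r)) - α + 1 + 2r) > c·α. -/
open Real

/-- with the constants of the construction, if `α > 1+2r` satisfies
`cos Δ ≥ (c+1)/log(α/(1+2r))`, then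
`sin(Δ)/√K + (α-1-2r)cos Δ + ((c+1)/(2 log(α/(1+2r))))·(α log(α/(1+2r)) - α + 1 + 2r) > cα`. -/
theorem statement_1 (c K ψ r Δ α : ℝ)
    (hc : 0 < c) (hc' : c < 1/3)
    (hK : K = (1 - c^2) / c^2)
    (hψ : ψ = Real.arcsin (Real.sqrt (1 - c^2)) / Real.sqrt K)
    (hr : 0 < r) (hr' : r ≤ π / (4 * Real.sqrt K) - ψ / 2)
    (hΔ : Δ = Real.sqrt K * (2*r + ψ))
    (hα : α > 1 + 2*r)
    (hcos : Real.cos Δ ≥ (c + 1) / Real.log (α / (1 + 2*r))) :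
    Real.sin Δ / Real.sqrt K + (α - 1 - 2*r) * Real.cos Δ
      + ((c + 1) / (2 * Real.log (α / (1 + 2*r))))
        * (α * Real.log (α / (1 + 2*r)) - α + 1 + 2*r)
      > c * α := by
  have hc2 : 0 < 1 - c^2 := by nlinarith
  have hKpos : 0 < K := by rw [hK]; positivity
  have hsK : 0 < Real.sqrt K := Real.sqrt_pos.mpr hKpos
  have h12r : (0:ℝ) < 1 + 2*r := by linarith
  have hL : 0 < Real.log (α / (1 + 2*r)) :=
    Real.log_pos (by rw [lt_div_iff₀ h12r]; linarith)
  set L := Real.log (α / (1 + 2*r)) with hLdef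
  have hψ0 : 0 ≤ ψ := by
    rw [hψ]
    exact div_nonneg (Real.arcsin_nonneg.mpr (Real.sqrt_nonneg _)) hsK.le
  have hΔ0 : 0 ≤ Δ := by
    rw [hΔ]; apply mul_nonneg hsK.le; linarith
  have hΔπ : Δ ≤ π := by
    rw [hΔ]
    have h1 : 2*r + ψ ≤ π / (2 * Real.sqrt K) := by
      have := hr'
      have h2 : π / (4 * Real.sqrt K) * 2 = π / (2 * Real.sqrt K) := by
        field_simp; ring
      nlinarith
    calc Real.sqrt K * (2*r+ψ) ≤ Real.sqrt K * (π / (2*Real.sqrt K)) :=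
          mul_le_mul_of_nonneg_left h1 hsK.le
      _ = π/2 := by field_simp
      _ ≤ π := by linarith [Real.pi_pos]
  have hsin : 0 ≤ Real.sin Δ := Real.sin_nonneg_of_nonneg_of_le_pi hΔ0 hΔπ
  have hsdiv : 0 ≤ Real.sin Δ / Real.sqrt K := div_nonneg hsin hsK.le
  have hαpos : 0 < α := by linarith
  set T := (c + 1) / (2 * L) with hTdef
  have hTpos : 0 < T := by positivity
  have h2T : (c+1)/L = 2*T := by rw [hTdef]; field_simp
  have hcos2 : 2*T ≤ Real.cos Δ := by rw [← h2T]; exact hcos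
  have h1 : T * (α * L - α + 1 + 2*r) = (c+1)*α/2 - T*(α-1-2*r) := by
    rw [hTdef]; field_simp; ring
  rw [h1]
  have h3 : (α-1-2*r)*T ≤ (α - 1 - 2*r) * (Real.cos Δ - T) :=
    mul_le_mul_of_nonneg_left (by linarith) (by linarith)
  nlinarith [mul_pos (show (0:ℝ) < α-1-2*r by linarith) hTpos,
    mul_pos hαpos (show (0:ℝ) < 1-c by linarith)]
end

section
/- Let 0 < c < 1/3, K = (1-c^2)/c^2, ψ = arcsin(√(1-c^2))/√K, 0 < r ≤ π/(4√K) - ψ/2, Δ = √K(2r+ψ), α > 1+2r, L = log(α/(1+2r)), and suppose cos Δ ≥ (c+1)/L. Define w₁(t) = sin(Δ)/√K + (t-1-2r)·cos Δ + ((c+1)/(2L))·(t·log(t/(1+2r)) - t + 1 + 2r). Then for every t ∈ [1+2r, α] one has cos Δ ≤ w₁'(t) ≤ (1+3c)/2 < 1. -/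
open Real

/-- with `L = log(α/(1+2r))`, `cos Δ ≥ (c+1)/L`, and
`w₁(t) = sin(Δ)/√K + (t-1-2r)cos Δ + ((c+1)/(2L))(t log(t/(1+2r)) - t + 1 + 2r)`,
for every `t ∈ [1+2r, α]` one has `cos Δ ≤ w₁'(t) ≤ (1+3c)/2 < 1`. -/
theorem statement_2 (c K ψ r Δ α L : ℝ) (w₁ : ℝ → ℝ)
    (hc : 0 < c) (hc' : c < 1/3)
    (hK : K = (1 - c^2) / c^2)
    (hψ : ψ = Real.arcsin (Real.sqrt (1 - c^2)) / Real.sqrt K)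
    (hr : 0 < r) (hr' : r ≤ π / (4 * Real.sqrt K) - ψ / 2)
    (hΔ : Δ = Real.sqrt K * (2*r + ψ))
    (hα : α > 1 + 2*r)
    (hL : L = Real.log (α / (1 + 2*r)))
    (hcos : Real.cos Δ ≥ (c + 1) / L)
    (hw : w₁ = fun t => Real.sin Δ / Real.sqrt K + (t - 1 - 2*r) * Real.cos Δ
      + ((c + 1) / (2 * L)) * (t * Real.log (t / (1 + 2*r)) - t + 1 + 2*r)) :
    ∀ t ∈ Set.Icc (1 + 2*r) α,
      Real.cos Δ ≤ deriv w₁ t ∧ deriv w₁ t ≤ (1 + 3*c)/2 ∧ (1 + 3*c)/2 < 1 := by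
  have h2r : (0:ℝ) < 1 + 2*r := by linarith
  have hLpos : 0 < L := by
    rw [hL]
    apply Real.log_pos
    rw [lt_div_iff₀ h2r]; linarith
  have hc2 : c^2 < 1 := by nlinarith
  have hKpos : 0 < K := by rw [hK]; exact div_pos (by nlinarith) (by positivity)
  have hsK : 0 < Real.sqrt K := Real.sqrt_pos.mpr hKpos
  have harc : Real.sqrt K * ψ = Real.arcsin (Real.sqrt (1 - c^2)) := by
    rw [hψ]; field_simp
  have hcosψ : Real.cos (Real.sqrt K * ψ) = c := by
    rw [harc, Real.cos_arcsin, Real.sq_sqrt (by linarith : (0:ℝ) ≤ 1 - c^2),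
      show 1 - (1 - c^2) = c^2 by ring, Real.sqrt_sq hc.le]
  have hψnn : 0 ≤ ψ := by
    rw [hψ]
    exact div_nonneg (Real.arcsin_nonneg.mpr (Real.sqrt_nonneg _)) hsK.le
  have hΔle : Δ ≤ π / 2 := by
    have h1 : 2*r + ψ ≤ π / (2 * Real.sqrt K) := by
      have heq : π / (2 * Real.sqrt K) = 2 * (π / (4 * Real.sqrt K)) := by ring
      rw [heq]; linarith
    calc Δ ≤ Real.sqrt K * (π / (2 * Real.sqrt K)) := by
            rw [hΔ]; exact mul_le_mul_of_nonneg_left h1 hsK.le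
      _ = π / 2 := by field_simp
  have hΔge : Real.sqrt K * ψ ≤ Δ := by
    rw [hΔ]; nlinarith
  have hψnn' : 0 ≤ Real.sqrt K * ψ := by positivity
  have hcosΔ : Real.cos Δ ≤ c := by
    rw [← hcosψ]
    exact Real.cos_le_cos_of_nonneg_of_le_pi hψnn'
      (by linarith [Real.pi_pos]) hΔge
  intro t ht
  obtain ⟨ht1, ht2⟩ := ht
  have ht0 : 0 < t := lt_of_lt_of_le h2r ht1
  have hd : HasDerivAt w₁ (Real.cos Δ + (c+1)/(2*L) * Real.log (t/(1+2*r))) t := by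
    rw [hw]
    have h1 : HasDerivAt (fun x : ℝ => x / (1+2*r)) (1/(1+2*r)) t :=
      (hasDerivAt_id t).div_const _
    have h2 : HasDerivAt (fun x : ℝ => Real.log (x/(1+2*r)))
        (1/(1+2*r) / (t/(1+2*r))) t := h1.log (by positivity)
    have h3 : HasDerivAt (fun x : ℝ => x * Real.log (x/(1+2*r)))
        (1 * Real.log (t/(1+2*r)) + t * (1/(1+2*r) / (t/(1+2*r)))) t :=
      (hasDerivAt_id t).mul h2
    have h4 : HasDerivAt (fun x : ℝ => x * Real.log (x/(1+2*r)) - x + 1 + 2*r)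
        ((1 * Real.log (t/(1+2*r)) + t * (1/(1+2*r) / (t/(1+2*r)))) - 1) t := by
      simpa using ((h3.sub (hasDerivAt_id t)).add_const 1).add_const (2*r)
    have h5 : HasDerivAt (fun x : ℝ => (x - 1 - 2*r) * Real.cos Δ)
        (1 * Real.cos Δ) t := by
      simpa using (((hasDerivAt_id t).sub_const 1).sub_const (2*r)).mul_const (Real.cos Δ)
    have h6 := ((hasDerivAt_const t (Real.sin Δ / Real.sqrt K)).add h5).add
      (h4.const_mul ((c+1)/(2*L)))
    refine h6.congr_deriv ?_
    have : t * (1/(1+2*r) / (t/(1+2*r))) = 1 := by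
      field_simp
    rw [this]
    ring
  rw [hd.deriv]
  have hlognn : 0 ≤ Real.log (t/(1+2*r)) := by
    apply Real.log_nonneg
    rw [le_div_iff₀ h2r]; linarith
  have hlogle : Real.log (t/(1+2*r)) ≤ L := by
    rw [hL]
    exact Real.log_le_log (by positivity) (by gcongr)
  have hA : 0 ≤ (c+1)/(2*L) := by positivity
  refine ⟨by nlinarith, ?_, by linarith⟩
  have : (c+1)/(2*L) * Real.log (t/(1+2*r)) ≤ (c+1)/(2*L) * L :=
    mul_le_mul_of_nonneg_left hlogle hA
  have hAL : (c+1)/(2*L) * L = (c+1)/2 := by field_simp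
  nlinarith
end

section
/- Let 0 < c < 1/3, K = (1-c^2)/c^2, ψ = arcsin(√(1-c^2))/√K, 0 < r ≤ π/(4√K) - ψ/2, Δ = √K(2r+ψ), and 0 < γ < 1/4. There exists α₁ > 1+2r, depending only on c, r, γ, such that for every α ≥ α₁, with L = log(α/(1+2r)) and w₁(t) = sin(Δ)/√K + (t-1-2r)·cos Δ + ((c+1)/(2L))·(t·log(t/(1+2r)) - t + 1 + 2r), one has w₁(t) > 0 and -3·w₁''(t)/w₁(t) + γ(1-2γ)/t² > 0 for all t ∈ [1+2r, α]. -/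
open Real

/-- The function `w₁` of the construction (for given constants `c, K, Δ, r, α`). -/
noncomputable def w₁fun (c K Δ r α : ℝ) : ℝ → ℝ := fun t =>
  Real.sin Δ / Real.sqrt K + (t - 1 - 2*r) * Real.cos Δ
    + ((c + 1) / (2 * Real.log (α / (1 + 2*r))))
      * (t * Real.log (t / (1 + 2*r)) - t + 1 + 2*r)

lemma w1_hasDerivAt (c K Δ r α : ℝ) (t : ℝ) (ht : 0 < t) (ha : (0:ℝ) < 1 + 2*r) :
    HasDerivAt (w₁fun c K Δ r α)
      (Real.cos Δ + ((c + 1) / (2 * Real.log (α / (1 + 2*r)))) * Real.log (t / (1 + 2*r))) t := by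
  have hane : (1 + 2*r) ≠ 0 := ne_of_gt ha
  have htne : t ≠ 0 := ne_of_gt ht
  have hdvne : t / (1 + 2*r) ≠ 0 := div_ne_zero htne hane
  have h1 : HasDerivAt (fun x : ℝ => x / (1 + 2*r)) (1 / (1 + 2*r)) t := by
    simpa using (hasDerivAt_id t).div_const (1 + 2*r)
  have h2 : HasDerivAt (fun x : ℝ => Real.log (x / (1 + 2*r)))
      ((t / (1 + 2*r))⁻¹ * (1 / (1 + 2*r))) t := by
    have := (Real.hasDerivAt_log hdvne).comp t h1; exact this
  have h2' : HasDerivAt (fun x : ℝ => Real.log (x / (1 + 2*r))) (1/t) t := by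
    convert h2 using 1
    field_simp
  have h3 : HasDerivAt (fun x : ℝ => x * Real.log (x / (1 + 2*r)))
      (1 * Real.log (t / (1 + 2*r)) + t * (1/t)) t :=
    (hasDerivAt_id t).mul h2'
  have h4 : HasDerivAt (fun x : ℝ => x * Real.log (x / (1 + 2*r)) - x + 1 + 2*r)
      (Real.log (t / (1 + 2*r))) t := by
    have := ((h3.sub (hasDerivAt_id t)).add_const (1:ℝ)).add_const (2*r)
    exact this.congr_deriv (by rw [mul_one_div_cancel htne]; ring)
  have h5 : HasDerivAt (fun x : ℝ => (x - 1 - 2*r) * Real.cos Δ) (Real.cos Δ) t := by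
    have := (((hasDerivAt_id t).sub_const (1:ℝ)).sub_const (2*r)).mul_const (Real.cos Δ)
    simpa using this
  have := (h5.const_add (Real.sin Δ / Real.sqrt K)).add
    (h4.const_mul ((c + 1) / (2 * Real.log (α / (1 + 2*r)))))
  unfold w₁fun
  exact this

lemma w1_deriv2 (c K Δ r α : ℝ) (t : ℝ) (ht : 0 < t) (ha : (0:ℝ) < 1 + 2*r) :
    deriv (deriv (w₁fun c K Δ r α)) t
      = ((c + 1) / (2 * Real.log (α / (1 + 2*r)))) / t := by
  have hane : (1 + 2*r) ≠ 0 := ne_of_gt ha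
  have htne : t ≠ 0 := ne_of_gt ht
  have hdvne : t / (1 + 2*r) ≠ 0 := div_ne_zero htne hane
  have hev : deriv (w₁fun c K Δ r α) =ᶠ[nhds t]
      (fun x => Real.cos Δ + ((c + 1) / (2 * Real.log (α / (1 + 2*r)))) * Real.log (x / (1 + 2*r))) := by
    filter_upwards [eventually_gt_nhds ht] with x hx
    exact (w1_hasDerivAt c K Δ r α x hx ha).deriv
  rw [hev.deriv_eq]
  have h1 : HasDerivAt (fun x : ℝ => x / (1 + 2*r)) (1 / (1 + 2*r)) t := by
    simpa using (hasDerivAt_id t).div_const (1 + 2*r)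
  have h2 : HasDerivAt (fun x : ℝ => Real.log (x / (1 + 2*r)))
      ((t / (1 + 2*r))⁻¹ * (1 / (1 + 2*r))) t := by
    have := (Real.hasDerivAt_log hdvne).comp t h1; exact this
  have h3 := (h2.const_mul ((c + 1) / (2 * Real.log (α / (1 + 2*r))))).const_add (Real.cos Δ)
  have h2' : ((t / (1 + 2*r))⁻¹ * (1 / (1 + 2*r))) = 1/t := by field_simp
  rw [h3.deriv, h2']
  ring

/-- there exists `α₁ > 1+2r`, depending only on `c, r, γ`, such that for
every `α ≥ α₁` one has `w₁(t) > 0` and `-3 w₁''(t)/w₁(t) + γ(1-2γ)/t² > 0` for all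
`t ∈ [1+2r, α]`. -/
theorem statement_3 (c K ψ r Δ γ : ℝ)
    (hc : 0 < c) (hc' : c < 1/3)
    (hK : K = (1 - c^2) / c^2)
    (hψ : ψ = Real.arcsin (Real.sqrt (1 - c^2)) / Real.sqrt K)
    (hr : 0 < r) (hr' : r ≤ π / (4 * Real.sqrt K) - ψ / 2)
    (hΔ : Δ = Real.sqrt K * (2*r + ψ))
    (hγ : 0 < γ) (hγ' : γ < 1/4) :
    ∃ α₁ : ℝ, α₁ > 1 + 2*r ∧ ∀ α ≥ α₁, ∀ t ∈ Set.Icc (1 + 2*r) α,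
      0 < w₁fun c K Δ r α t ∧
      -3 * deriv (deriv (w₁fun c K Δ r α)) t / w₁fun c K Δ r α t
        + γ * (1 - 2*γ) / t^2 > 0 := by
  have ha : (0:ℝ) < 1 + 2*r := by linarith
  have hKpos : 0 < K := by
    rw [hK]
    apply div_pos (by nlinarith) (by positivity)
  have hsK : 0 < Real.sqrt K := Real.sqrt_pos.mpr hKpos
  have hψnn : 0 ≤ ψ := by
    rw [hψ]
    exact div_nonneg (Real.arcsin_nonneg.mpr (Real.sqrt_nonneg _)) hsK.le
  have hΔpos : 0 < Δ := by
    rw [hΔ]; positivity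
  have hΔle : Δ ≤ π / 2 := by
    have h2 : 2*r + ψ ≤ π / (2 * Real.sqrt K) := by
      have : π / (2 * Real.sqrt K) = 2 * (π / (4 * Real.sqrt K)) := by ring
      linarith
    have := mul_le_mul_of_nonneg_left h2 hsK.le
    rw [hΔ]
    calc Real.sqrt K * (2*r + ψ) ≤ Real.sqrt K * (π / (2 * Real.sqrt K)) := this
      _ = π / 2 := by field_simp
  have hsin : 0 < Real.sin Δ :=
    Real.sin_pos_of_pos_of_lt_pi hΔpos (lt_of_le_of_lt hΔle (by linarith [Real.pi_pos]))
  have hcos : 0 ≤ Real.cos Δ :=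
    Real.cos_nonneg_of_mem_Icc ⟨by linarith [Real.pi_pos], hΔle⟩
  obtain ⟨s, hs_def⟩ : ∃ x : ℝ, x = Real.sin Δ / Real.sqrt K := ⟨_, rfl⟩
  have hs : 0 < s := by rw [hs_def]; exact div_pos hsin hsK
  obtain ⟨ε, hε_def⟩ : ∃ x : ℝ, x = γ * (1 - 2*γ) := ⟨_, rfl⟩
  have hε : 0 < ε := by
    rw [hε_def]
    have : 0 < 1 - 2*γ := by linarith
    positivity
  obtain ⟨M, hM_def⟩ : ∃ x : ℝ, x = 2 + 3 / ε := ⟨_, rfl⟩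
  obtain ⟨T₀, hT₀_def⟩ : ∃ x : ℝ, x = (1 + 2*r) * Real.exp M := ⟨_, rfl⟩
  have hT₀pos : 0 < T₀ := by rw [hT₀_def]; positivity
  obtain ⟨L₁, hL₁_def⟩ : ∃ x : ℝ, x = 1 + 3 * (c+1) * T₀ / (2 * ε * s) := ⟨_, rfl⟩
  have hL₁pos : 0 < L₁ := by
    rw [hL₁_def]
    have h1 : 0 ≤ 3 * (c+1) * T₀ / (2 * ε * s) :=
      div_nonneg (by nlinarith) (by linarith [mul_pos hε hs])
    linarith
  refine ⟨(1 + 2*r) * Real.exp L₁, ?_, ?_⟩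
  · have : (1:ℝ) < Real.exp L₁ := by
      calc (1:ℝ) = Real.exp 0 := Real.exp_zero.symm
        _ < Real.exp L₁ := Real.exp_lt_exp.mpr hL₁pos
    have h2 := mul_lt_mul_of_pos_left this ha
    linarith
  intro α hα t ht
  obtain ⟨ht1, ht2⟩ := ht
  have htpos : 0 < t := lt_of_lt_of_le ha ht1
  have htne : t ≠ 0 := ne_of_gt htpos
  have hane : (1 + 2*r) ≠ 0 := ne_of_gt ha
  obtain ⟨L, hL_def⟩ : ∃ x : ℝ, x = Real.log (α / (1 + 2*r)) := ⟨_, rfl⟩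
  have hL : L₁ ≤ L := by
    have h1 : Real.exp L₁ ≤ α / (1 + 2*r) := by
      rw [le_div_iff₀ ha]
      linarith
    calc L₁ = Real.log (Real.exp L₁) := (Real.log_exp L₁).symm
      _ ≤ L := by rw [hL_def]; exact Real.log_le_log (Real.exp_pos _) h1
  have hLpos : 0 < L := lt_of_lt_of_le hL₁pos hL
  obtain ⟨C, hC_def⟩ : ∃ x : ℝ, x = (c + 1) / (2 * L) := ⟨_, rfl⟩
  have hCpos : 0 < C := by rw [hC_def]; exact div_pos (by linarith) (by linarith)
  -- lower bound for the log term
  have hglb : 0 ≤ t * Real.log (t / (1 + 2*r)) - t + (1 + 2*r) := by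
    have hlog : 1 - (1 + 2*r)/t ≤ Real.log (t / (1 + 2*r)) := by
      have h1 : Real.log ((1 + 2*r)/t) ≤ (1 + 2*r)/t - 1 :=
        Real.log_le_sub_one_of_pos (by positivity)
      have h2 : Real.log (t / (1 + 2*r)) = - Real.log ((1 + 2*r)/t) := by
        rw [← Real.log_inv]
        congr 1
        field_simp
      linarith [h2 ▸ neg_le_neg h1]
    have h3 := mul_le_mul_of_nonneg_left hlog htpos.le
    have ht' : t * (1 - (1 + 2*r)/t) = t - (1 + 2*r) := by field_simp
    rw [ht'] at h3
    linarith
  -- positivity of w₁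
  have hterm2 : 0 ≤ (t - 1 - 2*r) * Real.cos Δ := mul_nonneg (by linarith) hcos
  have hW : 0 < w₁fun c K Δ r α t := by
    unfold w₁fun
    rw [← hL_def, ← hC_def, ← hs_def]
    linarith [mul_nonneg hCpos.le hglb, hterm2, hs]
  refine ⟨hW, ?_⟩
  -- key inequality : 3*C*t < ε * W
  have hM' : Real.log (t / (1 + 2*r)) = Real.log (t / (1 + 2*r)) := rfl
  have hkeyL : 3 * (c+1) * t <
      2 * L * ε * (s + (t - 1 - 2*r) * Real.cos Δ)
        + ε * (c+1) * (t * Real.log (t / (1 + 2*r)) - t + (1 + 2*r)) := by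
    rcases le_or_gt t T₀ with hcase | hcase
    · have h30 : (0:ℝ) ≤ 3*(c+1) := by linarith
      have hA : 3*(c+1)*t ≤ 3*(c+1)*T₀ := mul_le_mul_of_nonneg_left hcase h30
      have hL₁s : 2 * L₁ * ε * s = 2 * ε * s + 3 * (c+1) * T₀ := by
        rw [hL₁_def]; field_simp
      have hB : L₁ * (2*ε*s) ≤ L * (2*ε*s) :=
        mul_le_mul_of_nonneg_right hL (by linarith [mul_pos hε hs])
      have hX : 0 ≤ 2*L*ε * ((t - 1 - 2*r) * Real.cos Δ) :=
        mul_nonneg (by linarith [mul_pos hLpos hε]) hterm2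
      have hG : 0 ≤ ε*(c+1) * (t * Real.log (t / (1 + 2*r)) - t + (1 + 2*r)) :=
        mul_nonneg (by linarith [mul_pos hε (show (0:ℝ) < c+1 by linarith)]) hglb
      linarith [mul_pos hε hs, hA, hL₁s, hB, hX, hG]
    · have hMlt : M < Real.log (t / (1 + 2*r)) := by
        have h1 : Real.exp M < t / (1 + 2*r) := by
          rw [lt_div_iff₀ ha]
          linarith [hT₀_def, hcase]
        calc M = Real.log (Real.exp M) := (Real.log_exp M).symm
          _ < Real.log (t / (1 + 2*r)) := Real.log_lt_log (Real.exp_pos _) h1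
      have hεM : ε * M = 2 * ε + 3 := by
        rw [hM_def]; field_simp
      have hg' : t * M - t + (1 + 2*r) < t * Real.log (t / (1 + 2*r)) - t + (1 + 2*r) := by
        linarith [mul_lt_mul_of_pos_left hMlt htpos]
      have h2 : ε * (c+1) * (t * M - t + (1 + 2*r)) ≤ ε * (c+1) * (t * Real.log (t / (1 + 2*r)) - t + (1 + 2*r)) :=
        mul_le_mul_of_nonneg_left hg'.le (by linarith [mul_pos hε (show (0:ℝ) < c+1 by linarith)])
      have h3 : 3 * (c+1) * t < ε * (c+1) * (t * M - t + (1 + 2*r)) := by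
        have heq3 : ε * (c+1) * (t * M - t + (1 + 2*r)) = (c+1) * (t * (ε * M - ε) + ε * (1 + 2*r)) := by ring
        rw [heq3, hεM]
        linarith [mul_pos (mul_pos (show (0:ℝ) < c+1 by linarith) htpos) hε,
          mul_pos (mul_pos (show (0:ℝ) < c+1 by linarith) hε) ha]
      have hX : 0 ≤ 2*L*ε * (s + (t - 1 - 2*r) * Real.cos Δ) :=
        mul_nonneg (by linarith [mul_pos hLpos hε]) (by linarith)
      linarith [h2, h3, hX]
  have hkey : 3 * C * t < ε * w₁fun c K Δ r α t := by
    have h2L : (0:ℝ) < 2 * L := by linarith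
    have hCL : C * (2 * L) = c + 1 := by
      rw [hC_def]; field_simp
    rw [← mul_lt_mul_iff_of_pos_right h2L]
    have e1 : 3 * C * t * (2 * L) = 3 * (c+1) * t := by
      calc 3 * C * t * (2 * L) = 3 * (C * (2 * L)) * t := by ring
        _ = 3 * (c+1) * t := by rw [hCL]
    have e2 : ε * w₁fun c K Δ r α t * (2 * L)
        = 2 * L * ε * (s + (t - 1 - 2*r) * Real.cos Δ)
          + ε * (C * (2 * L)) * (t * Real.log (t / (1 + 2*r)) - t + (1 + 2*r)) := by
      unfold w₁fun
      rw [← hL_def, ← hC_def, ← hs_def]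
      ring
    rw [e1, e2, hCL]
    exact hkeyL
  -- conclude
  have hd2 := w1_deriv2 c K Δ r α t htpos ha
  rw [hd2, ← hL_def, ← hC_def]
  have hWne : w₁fun c K Δ r α t ≠ 0 := ne_of_gt hW
  have hlt : 3 * C / (t * w₁fun c K Δ r α t) < ε / t^2 := by
    rw [div_lt_div_iff₀ (mul_pos htpos hW) (by positivity)]
    linarith [mul_lt_mul_of_pos_right hkey htpos]
  have heq : -3 * (C / t) / w₁fun c K Δ r α t = -(3 * C / (t * w₁fun c K Δ r α t)) := by
    field_simp
  rw [heq, ← hε_def]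
  linarith
end

section
/- Let 0 < c < 1/3, K = (1-c^2)/c^2, ψ = arcsin(√(1-c^2))/√K, 0 < r ≤ π/(4√K) - ψ/2, Δ = √K(2r+ψ), and fix s > 0. Define u(t) = (s/√K)·sin(√K·(t/s - 1 + ψ)) for t ∈ [s, (1+2r)s]. Then on this interval u(t) > 0, cos Δ ≤ u'(t) ≤ c, and -u''(t)/u(t) = K/s². -/
open Real

/-- for `s > 0` and `u(t) = (s/√K)·sin(√K·(t/s - 1 + ψ))` on `[s,(1+2r)s]`,
one has `u > 0`, `cos Δ ≤ u' ≤ c`, and `-u''/u = K/s²` on this interval. -/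
theorem statement_4 (c K ψ r Δ s : ℝ) (u : ℝ → ℝ)
    (hc : 0 < c) (hc' : c < 1/3)
    (hK : K = (1 - c^2) / c^2)
    (hψ : ψ = Real.arcsin (Real.sqrt (1 - c^2)) / Real.sqrt K)
    (hr : 0 < r) (hr' : r ≤ π / (4 * Real.sqrt K) - ψ / 2)
    (hΔ : Δ = Real.sqrt K * (2*r + ψ))
    (hs : 0 < s)
    (hu : u = fun t => (s / Real.sqrt K) * Real.sin (Real.sqrt K * (t/s - 1 + ψ))) :
    ∀ t ∈ Set.Icc s ((1 + 2*r) * s),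
      0 < u t ∧ Real.cos Δ ≤ deriv u t ∧ deriv u t ≤ c ∧
      -(deriv (deriv u) t) / u t = K / s^2 := by
  have hc1 : c < 1 := by linarith
  have hc2 : 0 < 1 - c^2 := by nlinarith
  have hKpos : 0 < K := by
    rw [hK]; positivity
  set B := Real.sqrt K with hB
  have hBpos : 0 < B := Real.sqrt_pos.mpr hKpos
  have hBne : B ≠ 0 := ne_of_gt hBpos
  have hsne : s ≠ 0 := ne_of_gt hs
  have hBB : B * B = K := Real.mul_self_sqrt hKpos.le
  have hψeq : B * ψ = Real.arcsin (Real.sqrt (1 - c^2)) := by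
    rw [hψ]; field_simp
  have harc_pos : 0 < Real.arcsin (Real.sqrt (1 - c^2)) :=
    Real.arcsin_pos.mpr (Real.sqrt_pos.mpr hc2)
  have harc_le : Real.arcsin (Real.sqrt (1 - c^2)) ≤ π / 2 := Real.arcsin_le_pi_div_two _
  have hψpos : 0 < ψ := by
    rw [hψ]; exact div_pos harc_pos hBpos
  have hΔle : Δ ≤ π / 2 := by
    have h2 : 2 * r + ψ ≤ π / (2 * B) := by
      have : r ≤ π / (4 * B) - ψ / 2 := hr'
      have h4 : π / (4 * B) * 2 = π / (2 * B) := by field_simp; ring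
      linarith [this, h4]
    calc Δ = B * (2 * r + ψ) := hΔ
      _ ≤ B * (π / (2 * B)) := by
          exact mul_le_mul_of_nonneg_left h2 hBpos.le
      _ = π / 2 := by field_simp
  have hcosψ : Real.cos (B * ψ) = c := by
    rw [hψeq, Real.cos_arcsin, Real.sq_sqrt (by nlinarith : (0:ℝ) ≤ 1 - c^2)]
    rw [show 1 - (1 - c^2) = c^2 by ring, Real.sqrt_sq hc.le]
  -- derivatives
  have hg : ∀ t : ℝ, HasDerivAt (fun t => B * (t/s - 1 + ψ)) (B / s) t := by
    intro t
    have h1 : HasDerivAt (fun t : ℝ => t / s) (1 / s) t := by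
      simpa using (hasDerivAt_id t).div_const s
    have h2 := ((h1.sub_const 1).add_const ψ).const_mul B
    simpa [mul_one_div, div_eq_mul_inv] using h2
  have hderiv1 : ∀ t : ℝ, HasDerivAt u (Real.cos (B * (t/s - 1 + ψ))) t := by
    intro t
    have h := ((Real.hasDerivAt_sin (B * (t/s - 1 + ψ))).comp t (hg t)).const_mul (s / B)
    have heq : s / B * (Real.cos (B * (t/s - 1 + ψ)) * (B / s)) =
        Real.cos (B * (t/s - 1 + ψ)) := by field_simp
    rw [hu]
    simpa [heq] using h
  have hderiv_eq : deriv u = fun t => Real.cos (B * (t/s - 1 + ψ)) :=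
    funext fun t => (hderiv1 t).deriv
  have hderiv2 : ∀ t : ℝ, HasDerivAt (deriv u)
      (-Real.sin (B * (t/s - 1 + ψ)) * (B / s)) t := by
    intro t
    rw [hderiv_eq]
    exact (Real.hasDerivAt_cos (B * (t/s - 1 + ψ))).comp t (hg t)
  intro t ht
  obtain ⟨ht1, ht2⟩ := ht
  set θ := B * (t/s - 1 + ψ) with hθ
  have hθlo : B * ψ ≤ θ := by
    have : (1:ℝ) ≤ t / s := (one_le_div hs).mpr ht1
    have h0 : 0 ≤ t / s - 1 := by linarith
    rw [hθ]
    nlinarith [hBpos.le]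
  have hθhi : θ ≤ Δ := by
    have : t / s ≤ 1 + 2 * r := (div_le_iff₀ hs).mpr (by linarith [ht2])
    rw [hθ, hΔ]
    nlinarith [hBpos.le]
  have hθpos : 0 < θ := lt_of_lt_of_le (by positivity) hθlo
  have hθltpi : θ < π := lt_of_le_of_lt (le_trans hθhi hΔle)
    (by linarith [Real.pi_pos])
  have hsinpos : 0 < Real.sin θ := Real.sin_pos_of_pos_of_lt_pi hθpos hθltpi
  have hupos : 0 < u t := by
    rw [hu]; exact mul_pos (by positivity) hsinpos
  have hdu : deriv u t = Real.cos θ := (hderiv1 t).deriv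
  have hΔpos : 0 < Δ := lt_of_lt_of_le hθpos hθhi
  refine ⟨hupos, ?_, ?_, ?_⟩
  · rw [hdu]
    exact Real.cos_le_cos_of_nonneg_of_le_pi hθpos.le
      (le_trans hΔle (by linarith [Real.pi_pos])) hθhi
  · rw [hdu, ← hcosψ]
    exact Real.cos_le_cos_of_nonneg_of_le_pi (by positivity)
      (by linarith [Real.pi_pos, le_trans hθhi hΔle]) hθlo
  · have hddu : deriv (deriv u) t = -Real.sin θ * (B / s) := (hderiv2 t).deriv
    have hut : u t = s / B * Real.sin θ := by rw [hu]
    rw [hddu, hut]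
    have hne1 : s / B * Real.sin θ ≠ 0 := by positivity
    have hne2 : (s:ℝ)^2 ≠ 0 := by positivity
    rw [div_eq_div_iff hne1 hne2]
    clear_value θ
    rw [← hBB]
    field_simp
end

section
/- Let s > 0, r > 0, α > 1+2r, 0 < γ < 1/4, and 1/2 ≤ β ≤ 2. Let g be positive with g'(t)/g(t) = h(t), where h(t) = 6γβ·(t-(1+11r/6)s)/((1+2r)·r·s²) on the interval [(1+11r/6)s, (1+2r)s], and h(t) = 6γβ·(α(1+r/6)s - t)/(α²·r·s²) on the interval [αs, α(1+r/6)s]. Then |g''(t)/g(t)| ≤ 12γ(1+rγ/3)/(r·s²) on the first interval, and |g''(t)/g(t)| ≤ 12γ(1+rγ/3)/(r·(αs)²) on the second interval. -/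
open Real

lemma key_lemma {a b c k : ℝ} (hab : a < b) (h g : ℝ → ℝ)
    (hh : ∀ t, HasDerivAt h c t)
    (hgpos : ∀ t ∈ Set.Icc a b, 0 < g t)
    (hg : ∀ t ∈ Set.Icc a b, HasDerivAt g (h t * g t) t)
    (hbound : ∀ t ∈ Set.Icc a b, |c + (h t)^2| ≤ k) :
    ∀ t ∈ Set.Icc a b, |deriv (deriv g) t / g t| ≤ k := by
  intro t ht
  have hk : 0 ≤ k := le_trans (abs_nonneg _) (hbound t ht)
  by_cases hd : DifferentiableAt ℝ (deriv g) t
  · have hgt := hgpos t ht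
    have hF : HasDerivWithinAt (fun x => h x * g x)
        (c * g t + h t * (h t * g t)) (Set.Icc a b) t :=
      ((hh t).mul (hg t ht)).hasDerivWithinAt
    have heq : Set.EqOn (deriv g) (fun x => h x * g x) (Set.Icc a b) :=
      fun x hx => (hg x hx).deriv
    have hF2 : HasDerivWithinAt (deriv g) (c * g t + h t * (h t * g t))
        (Set.Icc a b) t := hF.congr heq (heq ht)
    have hu : UniqueDiffWithinAt ℝ (Set.Icc a b) t := (uniqueDiffOn_Icc hab) t ht
    have hF3 : HasDerivWithinAt (deriv g) (deriv (deriv g) t) (Set.Icc a b) t :=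
      hd.hasDerivAt.hasDerivWithinAt
    have hval : deriv (deriv g) t = c * g t + h t * (h t * g t) := by
      rw [← hF3.derivWithin hu, ← hF2.derivWithin hu]
    rw [hval]
    have hrw : (c * g t + h t * (h t * g t)) / g t = c + (h t)^2 := by
      field_simp
    rw [hrw]
    exact hbound t ht
  · rw [deriv_zero_of_not_differentiableAt hd]
    simpa using hk

/-- if `g > 0` satisfies `g'/g = h` with
`h(t) = 6γβ(t-(1+11r/6)s)/((1+2r)rs²)` on `[(1+11r/6)s, (1+2r)s]` and
`h(t) = 6γβ(α(1+r/6)s - t)/(α²rs²)` on `[αs, α(1+r/6)s]`, then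
`|g''/g| ≤ 12γ(1+rγ/3)/(rs²)` on the first interval and
`|g''/g| ≤ 12γ(1+rγ/3)/(r(αs)²)` on the second interval. -/
theorem statement_8 (s r α γ β : ℝ) (g : ℝ → ℝ)
    (hs : 0 < s) (hr : 0 < r) (hα : α > 1 + 2*r)
    (hγ : 0 < γ) (hγ' : γ < 1/4)
    (hβ₁ : 1/2 ≤ β) (hβ₂ : β ≤ 2)
    (hgpos₁ : ∀ t ∈ Set.Icc ((1 + 11*r/6) * s) ((1 + 2*r) * s), 0 < g t)
    (hgpos₂ : ∀ t ∈ Set.Icc (α * s) (α * (1 + r/6) * s), 0 < g t)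
    (hg₁ : ∀ t ∈ Set.Icc ((1 + 11*r/6) * s) ((1 + 2*r) * s),
      HasDerivAt g ((6*γ*β * (t - (1 + 11*r/6) * s) / ((1 + 2*r) * r * s^2)) * g t) t)
    (hg₂ : ∀ t ∈ Set.Icc (α * s) (α * (1 + r/6) * s),
      HasDerivAt g ((6*γ*β * (α * (1 + r/6) * s - t) / (α^2 * r * s^2)) * g t) t) :
    (∀ t ∈ Set.Icc ((1 + 11*r/6) * s) ((1 + 2*r) * s),
      |deriv (deriv g) t / g t| ≤ 12*γ * (1 + r*γ/3) / (r * s^2)) ∧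
    (∀ t ∈ Set.Icc (α * s) (α * (1 + r/6) * s),
      |deriv (deriv g) t / g t| ≤ 12*γ * (1 + r*γ/3) / (r * (α * s)^2)) := by
  have hβ0 : 0 < β := lt_of_lt_of_le (by norm_num) hβ₁
  have hα0 : 0 < α := by linarith
  constructor
  · -- first interval
    have hab : (1 + 11*r/6) * s < (1 + 2*r) * s := by nlinarith
    apply key_lemma hab
        (fun t => 6*γ*β * (t - (1 + 11*r/6) * s) / ((1 + 2*r) * r * s^2))
        g
        (c := 6*γ*β / ((1 + 2*r) * r * s^2))
    · intro t
      have := (((hasDerivAt_id t).sub_const ((1 + 11*r/6) * s)).const_mul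
        (6*γ*β)).div_const ((1 + 2*r) * r * s^2)
      simpa using this
    · exact hgpos₁
    · exact hg₁
    · intro t ht
      obtain ⟨ht1, ht2⟩ := ht
      have hD : (0:ℝ) < (1 + 2*r) * r * s^2 := by positivity
      have hta : 0 ≤ t - (1 + 11*r/6) * s := by linarith
      have htb : t - (1 + 11*r/6) * s ≤ r * s / 6 := by nlinarith
      have hh0 : 0 ≤ 6*γ*β * (t - (1 + 11*r/6) * s) / ((1 + 2*r) * r * s^2) := by
        apply div_nonneg _ hD.le
        exact mul_nonneg (by positivity) hta
      have hh1 : 6*γ*β * (t - (1 + 11*r/6) * s) / ((1 + 2*r) * r * s^2) ≤ 2*γ/s := by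
        rw [div_le_div_iff₀ hD hs]
        nlinarith [mul_nonneg (mul_nonneg hγ.le hs.le) (sub_nonneg.mpr htb),
          mul_nonneg (mul_nonneg hγ.le hs.le) hta,
          mul_nonneg (mul_nonneg (mul_nonneg hγ.le hs.le) hta) (sub_nonneg.mpr hβ₂),
          mul_pos hγ (mul_pos hr (pow_pos hs 2))]
      have hc : 6*γ*β / ((1 + 2*r) * r * s^2) ≤ 12*γ/(r*s^2) := by
        rw [div_le_div_iff₀ hD (by positivity)]
        nlinarith [mul_nonneg (mul_nonneg hγ.le (mul_nonneg hr.le (sq_nonneg s)))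
          (by linarith : (0:ℝ) ≤ 2 - β),
          mul_pos (mul_pos hγ hr) (mul_pos hr (pow_pos hs 2))]
      have hsq : (6*γ*β * (t - (1 + 11*r/6) * s) / ((1 + 2*r) * r * s^2))^2
          ≤ (2*γ/s)^2 := pow_le_pow_left₀ hh0 hh1 2
      rw [abs_of_nonneg (by positivity)]
      calc 6*γ*β / ((1 + 2*r) * r * s^2)
            + (6*γ*β * (t - (1 + 11*r/6) * s) / ((1 + 2*r) * r * s^2))^2
          ≤ 12*γ/(r*s^2) + (2*γ/s)^2 := add_le_add hc hsq
        _ = 12*γ * (1 + r*γ/3) / (r * s^2) := by field_simp; ring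
  · -- second interval
    have hab : α * s < α * (1 + r/6) * s := by nlinarith [mul_pos (mul_pos hα0 hr) hs]
    apply key_lemma hab
        (fun t => 6*γ*β * (α * (1 + r/6) * s - t) / (α^2 * r * s^2))
        g
        (c := -(6*γ*β / (α^2 * r * s^2)))
    · intro t
      have := (((hasDerivAt_id t).const_sub (α * (1 + r/6) * s)).const_mul
        (6*γ*β)).div_const (α^2 * r * s^2)
      simpa [neg_div] using this
    · exact hgpos₂
    · exact hg₂
    · intro t ht
      obtain ⟨ht1, ht2⟩ := ht
      have hD : (0:ℝ) < α^2 * r * s^2 := by positivity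
      have hta : 0 ≤ α * (1 + r/6) * s - t := by linarith
      have htb : α * (1 + r/6) * s - t ≤ α * r * s / 6 := by nlinarith
      have hh0 : 0 ≤ 6*γ*β * (α * (1 + r/6) * s - t) / (α^2 * r * s^2) := by
        apply div_nonneg _ hD.le
        exact mul_nonneg (by positivity) hta
      have hh1 : 6*γ*β * (α * (1 + r/6) * s - t) / (α^2 * r * s^2) ≤ 2*γ/(α*s) := by
        rw [div_le_div_iff₀ hD (by positivity)]
        nlinarith [mul_nonneg (mul_nonneg (mul_nonneg hγ.le hα0.le) hs.le)
            (sub_nonneg.mpr htb),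
          mul_nonneg (mul_nonneg (mul_nonneg hγ.le hα0.le) hs.le) hta,
          mul_nonneg (mul_nonneg (mul_nonneg (mul_nonneg hγ.le hα0.le) hs.le) hta)
            (sub_nonneg.mpr hβ₂),
          mul_pos hγ (mul_pos (mul_pos (pow_pos hα0 2) hr) (pow_pos hs 2))]
      have hc : 6*γ*β / (α^2 * r * s^2) ≤ 12*γ/(r*(α*s)^2) := by
        rw [div_le_div_iff₀ hD (by positivity)]
        nlinarith [mul_nonneg (mul_nonneg hγ.le
            (mul_nonneg (mul_nonneg hr.le (sq_nonneg α)) (sq_nonneg s)))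
          (by linarith : (0:ℝ) ≤ 2 - β)]
      have hsq : (6*γ*β * (α * (1 + r/6) * s - t) / (α^2 * r * s^2))^2
          ≤ (2*γ/(α*s))^2 := pow_le_pow_left₀ hh0 hh1 2
      calc |-(6*γ*β / (α^2 * r * s^2))
            + (6*γ*β * (α * (1 + r/6) * s - t) / (α^2 * r * s^2))^2|
          ≤ |-(6*γ*β / (α^2 * r * s^2))|
            + |(6*γ*β * (α * (1 + r/6) * s - t) / (α^2 * r * s^2))^2| := abs_add_le _ _
        _ = 6*γ*β / (α^2 * r * s^2)
            + (6*γ*β * (α * (1 + r/6) * s - t) / (α^2 * r * s^2))^2 := by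
            rw [abs_neg, abs_of_nonneg (by positivity), abs_of_nonneg (by positivity)]
        _ ≤ 12*γ/(r*(α*s)^2) + (2*γ/(α*s))^2 := add_le_add hc hsq
        _ = 12*γ * (1 + r*γ/3) / (r * (α * s)^2) := by
            rw [div_pow, div_add_div _ _ (by positivity) (by positivity),
              div_eq_div_iff (by positivity) (by positivity)]
            ring
end

section
/- Let m ≥ 2 and n ≥ 3 be integers, let 0 < c < 1/3, K = (1-c^2)/c^2, ψ = arcsin(√(1-c^2))/√K, 0 < r ≤ π/(4√K) - ψ/2 with Δ = √K(2r+ψ) satisfying cos Δ > 0, let 0 < γ < 1/4 and α > 1+2r. There exists T₀ > 0, depending only on m, n, c, r, γ, α, such that for every t ≥ T₀ and all real numbers g, G, q, u, p satisfying 0 < g ≤ α^γ·t^γ, |G| ≤ 2(1+r/6)γ/t, q/g ≤ 12γ(1+2r)(1+rγ/3)/(r·t²), u ≥ (cos Δ)·t, and 0 ≤ p ≤ (1+3c)/2, one has (n-2)·(1/g² - G²) - q/g - m·(p/u)·G > 0. -/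
open Real

set_option maxHeartbeats 1000000 in
/-- positivity of `Ric(Σ,Σ)` for the doubly warped product metric. There is
`T₀ > 0`, depending only on `m, n, c, r, γ, α`, such that for all `t ≥ T₀` and reals
`g, G, q, u, p` with `0 < g ≤ α^γ t^γ`, `|G| ≤ 2(1+r/6)γ/t`,
`q/g ≤ 12γ(1+2r)(1+rγ/3)/(rt²)`, `u ≥ (cos Δ)t`, `0 ≤ p ≤ (1+3c)/2`, one has
`(n-2)(1/g² - G²) - q/g - m(p/u)G > 0`. -/
theorem statement_10 (m n : ℕ) (hm : 2 ≤ m) (hn : 3 ≤ n)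
    (c K ψ r Δ γ α : ℝ)
    (hc : 0 < c) (hc' : c < 1/3)
    (hK : K = (1 - c^2) / c^2)
    (hψ : ψ = Real.arcsin (Real.sqrt (1 - c^2)) / Real.sqrt K)
    (hr : 0 < r) (hr' : r ≤ π / (4 * Real.sqrt K) - ψ / 2)
    (hΔ : Δ = Real.sqrt K * (2*r + ψ)) (hcosΔ : 0 < Real.cos Δ)
    (hγ : 0 < γ) (hγ' : γ < 1/4) (hα : α > 1 + 2*r) :
    ∃ T₀ : ℝ, 0 < T₀ ∧ ∀ t ≥ T₀, ∀ g G q u p : ℝ,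
      0 < g → g ≤ α ^ γ * t ^ γ →
      |G| ≤ 2 * (1 + r/6) * γ / t →
      q/g ≤ 12*γ * (1 + 2*r) * (1 + r*γ/3) / (r * t^2) →
      u ≥ Real.cos Δ * t →
      0 ≤ p → p ≤ (1 + 3*c)/2 →
      ((n : ℝ) - 2) * (1/g^2 - G^2) - q/g - (m : ℝ) * (p/u) * G > 0 := by
  have hα1 : (1:ℝ) < α := by nlinarith
  have hn2 : (1:ℝ) ≤ (n:ℝ) - 2 := by
    have : (3:ℝ) ≤ (n:ℝ) := by exact_mod_cast hn
    linarith
  set C1 : ℝ := 2*(1+r/6)*γ with hC1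
  set C2 : ℝ := 12*γ*(1+2*r)*(1+r*γ/3)/r with hC2
  set C3 : ℝ := (m:ℝ)*((1+3*c)/2)/Real.cos Δ * C1 with hC3
  set D : ℝ := ((n:ℝ)-2)*C1^2 + C2 + C3 with hD
  refine ⟨max 1 (α*D) + 1, by
    have := le_max_left (1:ℝ) (α*D); linarith, ?_⟩
  intro t ht g G q u p hg hgle hG hq hu hp hp'
  have ht1 : (1:ℝ) ≤ t := by
    have := le_max_left (1:ℝ) (α*D); linarith
  have ht0 : (0:ℝ) < t := by linarith
  have htαD : α*D < t := by
    have := le_max_right (1:ℝ) (α*D); linarith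
  have hαpos : (0:ℝ) < α := by linarith
  -- bound g^2 ≤ α * t
  have h1 : g^2 ≤ (α^γ * t^γ)^2 := by
    have := Real.rpow_nonneg hαpos.le γ
    nlinarith
  have h2 : (α^γ * t^γ)^2 = α^(2*γ) * t^(2*γ) := by
    rw [mul_pow, ← Real.rpow_natCast (α^γ) 2, ← Real.rpow_natCast (t^γ) 2,
      ← Real.rpow_mul hαpos.le, ← Real.rpow_mul ht0.le]
    norm_num
    ring_nf
  have h3 : α^(2*γ) ≤ α := by
    calc α^(2*γ) ≤ α^(1:ℝ) :=
          Real.rpow_le_rpow_of_exponent_le hα1.le (by linarith)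
      _ = α := Real.rpow_one α
  have h4 : t^(2*γ) ≤ t := by
    calc t^(2*γ) ≤ t^(1:ℝ) :=
          Real.rpow_le_rpow_of_exponent_le ht1 (by linarith)
      _ = t := Real.rpow_one t
  have hg2 : g^2 ≤ α * t := by
    have hta : (0:ℝ) ≤ t^(2*γ) := Real.rpow_nonneg ht0.le _
    calc g^2 ≤ α^(2*γ) * t^(2*γ) := by rw [← h2]; exact h1
      _ ≤ α * t := by
          apply mul_le_mul h3 h4 hta hαpos.le
  have hg2pos : (0:ℝ) < g^2 := by positivity
  have hinv : 1/(α*t) ≤ 1/g^2 := by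
    apply one_div_le_one_div_of_le hg2pos hg2
  -- bound on G
  have hGt : |G| ≤ C1/t := by rw [hC1]; exact hG
  have hG2 : G^2 ≤ C1^2/t^2 := by
    have h5 : |G|^2 ≤ (C1/t)^2 := pow_le_pow_left₀ (abs_nonneg G) hGt 2
    calc G^2 = |G|^2 := (sq_abs G).symm
      _ ≤ (C1/t)^2 := h5
      _ = C1^2/t^2 := by ring
  -- bound on q/g
  have hq' : q/g ≤ C2/t^2 := by rw [hC2, div_div]; exact hq
  -- bound on m(p/u)G
  have hu0 : (0:ℝ) < u := lt_of_lt_of_le (by positivity) hu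
  have hcpos : (0:ℝ) ≤ (1+3*c)/2 := by linarith
  have hpu : p/u ≤ ((1+3*c)/2)/(Real.cos Δ * t) :=
    div_le_div₀ hcpos hp' (by positivity) hu
  have hpu0 : (0:ℝ) ≤ p/u := by positivity
  have hC1t0 : (0:ℝ) ≤ C1/t := le_trans (abs_nonneg G) hGt
  have hterm : (m:ℝ) * (p/u) * G ≤ C3/t^2 := by
    have h5 : (m:ℝ) * (p/u) * G ≤ (m:ℝ) * (p/u) * |G| :=
      mul_le_mul_of_nonneg_left (le_abs_self G) (by positivity)
    have h6 : (m:ℝ) * (p/u) * |G| ≤ (m:ℝ) * (((1+3*c)/2)/(Real.cos Δ * t)) * (C1/t) := by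
      apply mul_le_mul _ hGt (abs_nonneg G) (by positivity)
      exact mul_le_mul_of_nonneg_left hpu (by positivity)
    have heq : (m:ℝ) * (((1+3*c)/2)/(Real.cos Δ * t)) * (C1/t) = C3/t^2 := by
      rw [hC3]
      field_simp
    linarith
  -- final estimate
  have hfin : D/t^2 < 1/(α*t) := by
    rw [div_lt_div_iff₀ (by positivity) (by positivity)]
    calc D * (α*t) = (α*D)*t := by ring
      _ < t*t := mul_lt_mul_of_pos_right htαD ht0
      _ = 1*t^2 := by ring
  have hsplit : D/t^2 = ((n:ℝ)-2)*(C1^2/t^2) + C2/t^2 + C3/t^2 := by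
    rw [hD]; ring
  have hA : 1/(α*t) ≤ ((n:ℝ)-2)*(1/g^2) := by
    have h7 : 1/g^2 ≤ ((n:ℝ)-2)*(1/g^2) := le_mul_of_one_le_left (by positivity) hn2
    linarith
  have hB : ((n:ℝ)-2)*G^2 ≤ ((n:ℝ)-2)*(C1^2/t^2) :=
    mul_le_mul_of_nonneg_left hG2 (by linarith)
  have expand : ((n:ℝ)-2)*(1/g^2 - G^2) = ((n:ℝ)-2)*(1/g^2) - ((n:ℝ)-2)*G^2 := by ring
  rw [gt_iff_lt, ← sub_pos.symm]
  rw [expand]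
  linarith
end

section
/- Let C₁ > 0, C₂ ∈ (0,1), C₃ ∈ (0,1), and N > 1/C₂, and let C₄ ∈ (0,1) satisfy C₂(1-C₄)^{C₃/(1-C₃)} = 1/N. Let t > 0, set l = C₁(NC₂)^{1/C₃}/t, and let b < R be real numbers with R - b = C₄·t/(C₁C₂(1-C₃)). Define ū(x) = C₂·(t/(C₁C₂))^{-C₃/(1-C₃)}·((1-C₃)x + N/l - (1-C₃)b)^{1/(1-C₃)} for x ∈ [b, R]. Then on [b,R]: ū'(x)/ū(x) = 1/((1-C₃)x + N/l - (1-C₃)b) and ū''(x)/ū(x) = C₃·(ū'(x)/ū(x))²; moreover ū(R) = t/C₁, ū'(R) = C₂, ū(b) = 1/l, and ū'(b) = 1/N. -/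
open Real

private lemma aux_hasDeriv (A k c p : ℝ) (x : ℝ) (hx : 0 < k * x + c) :
    HasDerivAt (fun y => A * (k * y + c) ^ p) (A * k * p * (k * x + c) ^ (p - 1)) x := by
  have h1 : HasDerivAt (fun y : ℝ => k * y + c) k x := by
    simpa using ((hasDerivAt_id x).const_mul k).add_const c
  have h3 := (h1.rpow_const (p := p) (Or.inl (ne_of_gt hx))).const_mul A
  rw [show A * k * p * (k * x + c) ^ (p - 1) = A * (k * p * (k * x + c) ^ (p - 1)) from by ring]
  exact h3

private lemma aux_deriv (A k c p : ℝ) (x : ℝ) (hx : 0 < k * x + c) :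
    deriv (fun y => A * (k * y + c) ^ p) x = A * k * p * (k * x + c) ^ (p - 1) :=
  (aux_hasDeriv A k c p x hx).deriv

private lemma aux_deriv2 (A k c p : ℝ) (x : ℝ) (hx : 0 < k * x + c) :
    deriv (deriv (fun y => A * (k * y + c) ^ p)) x
      = (A * k * p) * k * (p - 1) * (k * x + c) ^ (p - 1 - 1) := by
  have hU : IsOpen {y : ℝ | 0 < k * y + c} :=
    isOpen_lt continuous_const (by continuity)
  have hEq : deriv (fun y => A * (k * y + c) ^ p)
      =ᶠ[nhds x] fun y => (A * k * p) * (k * y + c) ^ (p - 1) := by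
    filter_upwards [hU.mem_nhds hx] with y hy
    exact (aux_hasDeriv A k c p y hy).deriv
  rw [hEq.deriv_eq]
  exact (aux_hasDeriv (A * k * p) k c (p - 1) x hx).deriv

/-- properties of the warping function
`ū(x) = C₂ (t/(C₁C₂))^{-C₃/(1-C₃)} ((1-C₃)x + N/l - (1-C₃)b)^{1/(1-C₃)}` on `[b, R]`:
`ū'/ū = 1/((1-C₃)x + N/l - (1-C₃)b)`, `ū''/ū = C₃ (ū'/ū)²`, and the boundary values
`ū(R) = t/C₁`, `ū'(R) = C₂`, `ū(b) = 1/l`, `ū'(b) = 1/N`. -/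
theorem statement_15 (C₁ C₂ C₃ N C₄ t l b R : ℝ) (ub : ℝ → ℝ)
    (hC₁ : 0 < C₁) (hC₂ : C₂ ∈ Set.Ioo (0:ℝ) 1) (hC₃ : C₃ ∈ Set.Ioo (0:ℝ) 1)
    (hN : N > 1/C₂)
    (hC₄ : C₄ ∈ Set.Ioo (0:ℝ) 1)
    (hC₄eq : C₂ * (1 - C₄) ^ (C₃ / (1 - C₃)) = 1/N)
    (ht : 0 < t)
    (hl : l = C₁ * (N * C₂) ^ (1/C₃) / t)
    (hbR : b < R)
    (hRb : R - b = C₄ * t / (C₁ * C₂ * (1 - C₃)))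
    (hub : ub = fun x => C₂ * (t / (C₁ * C₂)) ^ (-(C₃ / (1 - C₃)))
      * ((1 - C₃) * x + N/l - (1 - C₃) * b) ^ (1 / (1 - C₃))) :
    (∀ x ∈ Set.Icc b R,
      deriv ub x / ub x = 1 / ((1 - C₃) * x + N/l - (1 - C₃) * b) ∧
      deriv (deriv ub) x / ub x = C₃ * (deriv ub x / ub x)^2) ∧
    ub R = t / C₁ ∧ deriv ub R = C₂ ∧ ub b = 1/l ∧ deriv ub b = 1/N := by
  obtain ⟨hC₂0, hC₂1⟩ := hC₂
  obtain ⟨hC₃0, hC₃1⟩ := hC₃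
  obtain ⟨hC₄0, hC₄1⟩ := hC₄
  have hk : (0:ℝ) < 1 - C₃ := by linarith
  have hk4 : (0:ℝ) < 1 - C₄ := by linarith
  have hw : (1:ℝ) < N * C₂ := by
    have h := (div_lt_iff₀ hC₂0).mp hN
    linarith
  have hw0 : (0:ℝ) < N * C₂ := by linarith
  have hN0 : (0:ℝ) < N := by nlinarith
  have hw13 : 0 < (N * C₂) ^ (1/C₃) := Real.rpow_pos_of_pos hw0 _
  have hl0 : 0 < l := by rw [hl]; positivity
  obtain ⟨s, hsdef⟩ : ∃ s : ℝ, s = t / (C₁ * C₂) := ⟨_, rfl⟩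
  obtain ⟨k, hkdef⟩ : ∃ k : ℝ, k = 1 - C₃ := ⟨_, rfl⟩
  obtain ⟨p, hpdef⟩ : ∃ p : ℝ, p = 1 / (1 - C₃) := ⟨_, rfl⟩
  obtain ⟨c, hcdef⟩ : ∃ c : ℝ, c = N / l - (1 - C₃) * b := ⟨_, rfl⟩
  obtain ⟨A, hAdef⟩ : ∃ A : ℝ, A = C₂ * s ^ (-(C₃ / (1 - C₃))) := ⟨_, rfl⟩
  have hs : 0 < s := by rw [hsdef]; positivity
  have hnl0 : 0 < N / l := by positivity
  have hA0 : 0 < A := by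
    rw [hAdef]
    have := Real.rpow_pos_of_pos hs (-(C₃ / (1 - C₃)))
    positivity
  have hkp : k * p = 1 := by
    rw [hkdef, hpdef]; field_simp
  have hkp1 : k * (p - 1) = C₃ := by
    rw [hkdef, hpdef]; field_simp; ring
  have hub2 : ub = fun x => A * (k * x + c) ^ p := by
    rw [hub, hAdef, hkdef, hpdef, hcdef, hsdef]; funext x
    rw [show (1 - C₃) * x + N/l - (1 - C₃) * b
          = (1 - C₃) * x + (N/l - (1 - C₃) * b) from by ring]
  -- key rpow identity for 1 - C₄
  have hq : (1 - C₄) ^ (C₃ / (1 - C₃)) = (N * C₂)⁻¹ := by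
    have h1 : (1 - C₄) ^ (C₃ / (1 - C₃)) = (1/N) / C₂ := by
      rw [← hC₄eq]; field_simp
    rw [h1]; field_simp
  have h14 : 1 - C₄ = (N * C₂) ^ (-((1 - C₃)/C₃)) := by
    have e1 : ((1 - C₄) ^ (C₃ / (1 - C₃))) ^ ((1 - C₃)/C₃) = 1 - C₄ := by
      rw [← Real.rpow_mul hk4.le]
      rw [show (C₃/(1 - C₃)) * ((1 - C₃)/C₃) = 1 from by field_simp]
      exact Real.rpow_one _
    rw [hq] at e1
    rw [← e1, ← Real.rpow_neg_one (N * C₂), ← Real.rpow_mul hw0.le]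
    norm_num
  have hr : (N * C₂) ^ (-((1 - C₃)/C₃)) = (N * C₂) / (N * C₂) ^ (1/C₃) := by
    rw [show -((1 - C₃)/C₃) = 1 - 1/C₃ from by field_simp; ring]
    rw [Real.rpow_sub hw0, Real.rpow_one]
  have hnleq : N / l = s * (1 - C₄) := by
    rw [hl, h14, hr, hsdef]
    field_simp
  have hgR : k * R + c = s := by
    have h1 : k * R + c = k * (R - b) + N/l := by rw [hcdef, hkdef]; ring
    rw [h1, hRb, hnleq, hkdef, hsdef]
    field_simp
    ring
  have hgR0 : 0 < k * R + c := by rw [hgR]; exact hs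
  have hgb : k * b + c = s * (1 - C₄) := by
    rw [hcdef, hkdef, ← hnleq]; ring
  have hgb0 : 0 < k * b + c := by rw [hgb]; positivity
  have hpos : ∀ x ∈ Set.Icc b R, 0 < k * x + c := by
    intro x hx
    have h1 : k * b ≤ k * x := by
      apply mul_le_mul_of_nonneg_left hx.1
      rw [hkdef]; exact hk.le
    linarith [hgb0]
  have hexp1 : -(C₃/(1 - C₃)) + p = 1 := by rw [hpdef]; field_simp; ring
  have hexp0 : -(C₃/(1 - C₃)) + (p - 1) = 0 := by rw [hpdef]; field_simp; ring
  refine ⟨?_, ?_, ?_, ?_, ?_⟩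
  · intro x hx
    have hgx := hpos x hx
    have hgxne : (k * x + c) ≠ 0 := ne_of_gt hgx
    have hgxp : (0:ℝ) < (k * x + c) ^ p := Real.rpow_pos_of_pos hgx p
    have hxp1 : (k * x + c) ^ (p - 1) = (k * x + c) ^ p / (k * x + c) := by
      rw [Real.rpow_sub hgx, Real.rpow_one]
    have hxp2 : (k * x + c) ^ (p - 1 - 1) = (k * x + c) ^ p / ((k * x + c) * (k * x + c)) := by
      rw [Real.rpow_sub hgx, Real.rpow_sub hgx, Real.rpow_one, div_div]
    have hbase : (1 - C₃) * x + N/l - (1 - C₃) * b = k * x + c := by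
      rw [hkdef, hcdef]; ring
    have hfirst : deriv ub x / ub x = 1 / ((1 - C₃) * x + N/l - (1 - C₃) * b) := by
      rw [hbase]
      simp only [hub2]
      rw [aux_deriv A k c p x hgx,
        show A * k * p = A from by rw [mul_assoc, hkp, mul_one], hxp1]
      field_simp
    refine ⟨hfirst, ?_⟩
    rw [hfirst, hbase]
    simp only [hub2]
    rw [aux_deriv2 A k c p x hgx, hxp2]
    have e : A * k * p * k * (p - 1) = A * C₃ := by
      calc A * k * p * k * (p - 1) = A * (k * p) * (k * (p - 1)) := by ring
        _ = A * C₃ := by rw [hkp, hkp1, mul_one]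
    rw [e]
    field_simp
  · rw [hub2]
    show A * (k * R + c) ^ p = t / C₁
    rw [hgR, hAdef, mul_assoc, ← Real.rpow_add hs, hexp1, Real.rpow_one, hsdef]
    field_simp
  · simp only [hub2]
    rw [aux_deriv A k c p R hgR0, hgR]
    rw [show A * k * p * s ^ (p-1) = (k*p) * (C₂ * (s ^ (-(C₃/(1-C₃))) * s ^ (p-1)))
          from by rw [hAdef]; ring]
    rw [hkp, one_mul, ← Real.rpow_add hs, hexp0, Real.rpow_zero, mul_one]
  · rw [hub2]
    show A * (k * b + c) ^ p = 1/l
    rw [hgb, Real.mul_rpow hs.le hk4.le]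
    have e1 : (1 - C₄) ^ p = ((N * C₂) ^ (1/C₃))⁻¹ := by
      rw [h14, ← Real.rpow_mul hw0.le,
        show -((1 - C₃)/C₃) * p = -(1/C₃) from by rw [hpdef]; field_simp,
        Real.rpow_neg hw0.le]
    rw [e1, hAdef, show C₂ * s ^ (-(C₃/(1-C₃))) * (s ^ p * ((N*C₂)^(1/C₃))⁻¹)
          = C₂ * (s ^ (-(C₃/(1-C₃))) * s ^ p) * ((N*C₂)^(1/C₃))⁻¹ from by ring]
    rw [← Real.rpow_add hs, hexp1, Real.rpow_one, hsdef, hl]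
    field_simp
  · simp only [hub2]
    rw [aux_deriv A k c p b hgb0, hgb, Real.mul_rpow hs.le hk4.le]
    rw [show A * k * p * (s ^ (p-1) * (1-C₄)^(p-1))
          = (k*p) * (C₂ * (s ^ (-(C₃/(1-C₃))) * s ^ (p-1)) * (1-C₄)^(p-1))
          from by rw [hAdef]; ring]
    rw [hkp, one_mul, ← Real.rpow_add hs, hexp0, Real.rpow_zero, mul_one,
      show p - 1 = C₃ / (1 - C₃) from by rw [hpdef]; field_simp; ring]
    exact hC₄eq
end

section
/- Let m, n be integers with n ≥ m ≥ 2 and n ≥ 3, let N ≥ 5n be a real number, let l > 0, b ∈ [1/l, 2/l], and d ∈ (0, min(b, π/(2l))]. Define ū(x) = (1/l)·exp(l·(x² - b²)/(2Nb)) and ḡ(x) = sin(l·x)/l for x ∈ [0, d]. Then for every x ∈ [0, d]: (i) -m·ū''(x)/ū(x) - (n-1)·ḡ''(x)/ḡ(x) > 0 (for x ∈ (0,d], and in the limit at x = 0); (ii) (m-1)·(1 - ū'(x)²)/ū(x)² - ū''(x)/ū(x) - (n-1)·(ū'(x)/ū(x))·(ḡ'(x)/ḡ(x)) > 0; (iii)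 (n-2)·(1/ḡ(x)² - (ḡ'(x)/ḡ(x))²) - ḡ''(x)/ḡ(x) - m·(ū'(x)/ū(x))·(ḡ'(x)/ḡ(x)) > 0, where at x = 0 the quotient ḡ'/ḡ·ū'/ū is interpreted by its limit. In the course of the proof one has 0 < ū''/ū ≤ (1/N + 1/N²)·l², 0 ≤ ū' ≤ 1/N, ū ≤ 1/l, and ḡ''/ḡ = -l². -/
open Real Filter

lemma aux_tcos (t : ℝ) (ht : 0 < t) (ht' : t ≤ π/2) : t * Real.cos t ≤ Real.sin t := by
  rcases lt_or_eq_of_le ht' with h | h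
  · have htan := Real.lt_tan ht h
    have hc : 0 < Real.cos t := Real.cos_pos_of_mem_Ioo ⟨by linarith [Real.pi_pos], h⟩
    rw [Real.tan_eq_sin_div_cos, lt_div_iff₀ hc] at htan
    linarith
  · rw [h]; simp [Real.cos_pi_div_two]

lemma aux_sin_div : Tendsto (fun y : ℝ => Real.sin y / y) (nhdsWithin 0 {(0:ℝ)}ᶜ) (nhds 1) := by
  have h := (Real.hasDerivAt_sin 0)
  rw [hasDerivAt_iff_tendsto_slope] at h
  simp only [Real.cos_zero] at h
  refine h.congr fun y => ?_
  simp [slope_def_field]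

lemma aux_div_sin : Tendsto (fun y : ℝ => y / Real.sin y) (nhdsWithin 0 {(0:ℝ)}ᶜ) (nhds 1) := by
  have := aux_sin_div.inv₀ one_ne_zero
  simpa [inv_div] using this

lemma aux_xcot (l : ℝ) (hl : 0 < l) :
    Tendsto (fun x : ℝ => x * Real.cos (l*x) / Real.sin (l*x)) (nhdsWithin 0 (Set.Ioi 0)) (nhds (1/l)) := by
  have hmap : Tendsto (fun x : ℝ => l * x) (nhdsWithin 0 (Set.Ioi 0)) (nhdsWithin 0 {(0:ℝ)}ᶜ) := by
    apply tendsto_nhdsWithin_of_tendsto_nhds_of_eventually_within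
    · have : Tendsto (fun x : ℝ => l * x) (nhds 0) (nhds (l * 0)) :=
        (continuous_const.mul continuous_id).tendsto 0
      simpa using this.mono_left nhdsWithin_le_nhds
    · filter_upwards [self_mem_nhdsWithin] with x hx
      have : (0:ℝ) < x := hx
      simp only [Set.mem_compl_iff, Set.mem_singleton_iff]
      positivity
  have h1 : Tendsto (fun x : ℝ => (l*x) / Real.sin (l*x)) (nhdsWithin 0 (Set.Ioi 0)) (nhds 1) :=
    aux_div_sin.comp hmap
  have hcos : Tendsto (fun x : ℝ => Real.cos (l*x)) (nhdsWithin 0 (Set.Ioi 0)) (nhds 1) := by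
    have : Tendsto (fun x : ℝ => Real.cos (l*x)) (nhds 0) (nhds (Real.cos (l * 0))) :=
      (Real.continuous_cos.comp (continuous_const.mul continuous_id)).tendsto 0
    simpa using this.mono_left nhdsWithin_le_nhds
  have heq : (fun x : ℝ => x * Real.cos (l*x) / Real.sin (l*x))
      = fun x : ℝ => (1/l) * ((l*x) / Real.sin (l*x) * Real.cos (l*x)) := by
    funext x
    rw [one_div, inv_mul_eq_div, eq_div_iff (ne_of_gt hl)]
    ring
  rw [heq]
  have := (h1.mul hcos).const_mul (1/l)
  simpa using this

set_option maxHeartbeats 1000000 in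
/-- on the innermost interval `[0,d]` of the pieces `P_i`, with
`ū(x) = (1/l) exp(l(x²-b²)/(2Nb))` and `ḡ(x) = sin(lx)/l`, the three Ricci curvatures
`Ric(T,T)`, `Ric(Θ,Θ)`, `Ric(Σ,Σ)` are positive for `x ∈ (0,d]` and in the limit at
`x = 0`; in the course of the proof one has `0 < ū''/ū ≤ (1/N+1/N²)l²`, `0 ≤ ū' ≤ 1/N`,
`ū ≤ 1/l` and `ḡ''/ḡ = -l²`. -/
theorem statement_16 (m n : ℕ) (hm : 2 ≤ m) (hmn : m ≤ n) (hn : 3 ≤ n)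
    (N l b d : ℝ) (ub gb : ℝ → ℝ)
    (hN : 5 * (n : ℝ) ≤ N) (hl : 0 < l)
    (hb : b ∈ Set.Icc (1/l) (2/l))
    (hd : 0 < d) (hd' : d ≤ min b (π / (2 * l)))
    (hub : ub = fun x => (1/l) * Real.exp (l * (x^2 - b^2) / (2 * N * b)))
    (hgb : gb = fun x => Real.sin (l * x) / l) :
    -- (i), (ii), (iii) for `x ∈ (0, d]`
    (∀ x ∈ Set.Ioc 0 d,
      -(m : ℝ) * (deriv (deriv ub) x / ub x)
        - ((n : ℝ) - 1) * (deriv (deriv gb) x / gb x) > 0 ∧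
      ((m : ℝ) - 1) * (1 - (deriv ub x)^2) / (ub x)^2 - deriv (deriv ub) x / ub x
        - ((n : ℝ) - 1) * (deriv ub x / ub x) * (deriv gb x / gb x) > 0 ∧
      ((n : ℝ) - 2) * (1 / (gb x)^2 - (deriv gb x / gb x)^2)
        - deriv (deriv gb) x / gb x
        - (m : ℝ) * (deriv ub x / ub x) * (deriv gb x / gb x) > 0) ∧
    -- (i), (ii), (iii) hold in the limit at `x = 0`
    (∃ L₁ > (0:ℝ), Tendsto (fun x => -(m : ℝ) * (deriv (deriv ub) x / ub x)
        - ((n : ℝ) - 1) * (deriv (deriv gb) x / gb x))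
      (nhdsWithin 0 (Set.Ioi 0)) (nhds L₁)) ∧
    (∃ L₂ > (0:ℝ), Tendsto (fun x => ((m : ℝ) - 1) * (1 - (deriv ub x)^2) / (ub x)^2
        - deriv (deriv ub) x / ub x
        - ((n : ℝ) - 1) * (deriv ub x / ub x) * (deriv gb x / gb x))
      (nhdsWithin 0 (Set.Ioi 0)) (nhds L₂)) ∧
    (∃ L₃ > (0:ℝ), Tendsto (fun x => ((n : ℝ) - 2) * (1 / (gb x)^2 - (deriv gb x / gb x)^2)
        - deriv (deriv gb) x / gb x
        - (m : ℝ) * (deriv ub x / ub x) * (deriv gb x / gb x))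
      (nhdsWithin 0 (Set.Ioi 0)) (nhds L₃)) ∧
    -- the auxiliary bounds from the proof
    (∀ x ∈ Set.Icc 0 d,
      0 < deriv (deriv ub) x / ub x ∧
      deriv (deriv ub) x / ub x ≤ (1/N + 1/N^2) * l^2 ∧
      0 ≤ deriv ub x ∧ deriv ub x ≤ 1/N ∧ ub x ≤ 1/l) ∧
    (∀ x ∈ Set.Ioc 0 d, deriv (deriv gb) x / gb x = -l^2) := by
  obtain ⟨hb1, hb2⟩ := hb
  have hl' : l ≠ 0 := ne_of_gt hl
  have hn3 : (3:ℝ) ≤ (n:ℝ) := by exact_mod_cast hn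
  have hm2 : (2:ℝ) ≤ (m:ℝ) := by exact_mod_cast hm
  have hmn' : (m:ℝ) ≤ (n:ℝ) := by exact_mod_cast hmn
  have hN0 : (0:ℝ) < N := by nlinarith
  have hN15 : (15:ℝ) ≤ N := by nlinarith
  have hb0 : 0 < b := lt_of_lt_of_le (by positivity) hb1
  have hlb : 1 ≤ l * b := by
    rw [div_le_iff₀ hl] at hb1; nlinarith
  have hdb : d ≤ b := le_trans hd' (min_le_left _ _)
  have hdpi : d ≤ π / (2*l) := le_trans hd' (min_le_right _ _)
  have hl2 : (0:ℝ) < l^2 := by positivity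
  -- positivity of ub
  have hu_pos : ∀ x, 0 < ub x := by intro x; rw [hub]; positivity
  -- first derivative of ub
  have hud : ∀ x, HasDerivAt ub (l*x/(N*b) * ub x) x := by
    intro x
    have h1 : HasDerivAt (fun y : ℝ => l * (y^2 - b^2) / (2*N*b)) (l*x/(N*b)) x := by
      have h := (((hasDerivAt_pow 2 x).sub_const (b^2)).const_mul l).div_const (2*N*b)
      refine h.congr_deriv ?_
      field_simp
      ring
    have h2 := (h1.exp).const_mul (1/l)
    rw [hub]
    refine h2.congr_deriv ?_
    beta_reduce
    ring
  have hud' : deriv ub = fun x => l*x/(N*b) * ub x := funext fun x => (hud x).deriv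
  have hudd : ∀ x, HasDerivAt (deriv ub) ((l/(N*b) + (l*x/(N*b))^2) * ub x) x := by
    intro x
    rw [hud']
    have h1 : HasDerivAt (fun y : ℝ => l*y/(N*b)) (l/(N*b)) x := by
      simpa using ((hasDerivAt_id x).const_mul l).div_const (N*b)
    have h2 := h1.mul (hud x)
    refine h2.congr_deriv ?_
    ring
  have hudd' : ∀ x, deriv (deriv ub) x = (l/(N*b) + (l*x/(N*b))^2) * ub x :=
    fun x => (hudd x).deriv
  -- derivatives of gb
  have hgd : ∀ x, HasDerivAt gb (Real.cos (l*x)) x := by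
    intro x
    have h1 : HasDerivAt (fun y : ℝ => l*y) l x := by
      simpa using (hasDerivAt_id x).const_mul l
    have h2 := ((Real.hasDerivAt_sin (l*x)).comp x h1).div_const l
    rw [hgb]
    refine h2.congr_deriv ?_
    field_simp
  have hgd' : deriv gb = fun x => Real.cos (l*x) := funext fun x => (hgd x).deriv
  have hgdd : ∀ x, HasDerivAt (deriv gb) (-l^2 * gb x) x := by
    intro x
    rw [hgd']
    have h1 : HasDerivAt (fun y : ℝ => l*y) l x := by
      simpa using (hasDerivAt_id x).const_mul l
    have h2 := (Real.hasDerivAt_cos (l*x)).comp x h1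
    refine h2.congr_deriv ?_
    rw [hgb]
    field_simp
  have hgdd' : ∀ x, deriv (deriv gb) x = -l^2 * gb x := fun x => (hgdd x).deriv
  -- quotient values
  have hcanc : ∀ x, deriv (deriv ub) x / ub x = l/(N*b) + (l*x/(N*b))^2 := by
    intro x
    rw [hudd' x]
    exact mul_div_cancel_right₀ _ (ne_of_gt (hu_pos x))
  have hruv : ∀ x, deriv ub x / ub x = l*x/(N*b) := by
    intro x
    rw [hud']
    exact mul_div_cancel_right₀ _ (ne_of_gt (hu_pos x))
  have hrgv : ∀ x, deriv gb x / gb x = l * Real.cos (l*x) / Real.sin (l*x) := by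
    intro x
    rw [hgd', hgb]
    simp only
    rw [div_div_eq_mul_div, mul_comm (Real.cos (l*x)) l]
  -- basic bounds
  have hub_le : ∀ x ∈ Set.Icc (0:ℝ) d, ub x ≤ 1/l := by
    intro x hx
    rw [hub]
    simp only
    have hexp : Real.exp (l * (x^2 - b^2) / (2*N*b)) ≤ 1 := by
      apply Real.exp_le_one_iff.2
      have hx2 : x^2 ≤ b^2 := by nlinarith [hx.1, hx.2]
      have : l * (x^2 - b^2) ≤ 0 := by nlinarith
      have h2Nb : (0:ℝ) < 2*N*b := by positivity
      exact div_nonpos_of_nonpos_of_nonneg this h2Nb.le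
    calc 1/l * Real.exp (l * (x^2 - b^2) / (2*N*b)) ≤ 1/l * 1 := by
          apply mul_le_mul_of_nonneg_left hexp (by positivity)
      _ = 1/l := by ring
  have hsin_pos : ∀ x ∈ Set.Ioc (0:ℝ) d, 0 < Real.sin (l*x) := by
    intro x hx
    apply Real.sin_pos_of_pos_of_lt_pi (mul_pos hl hx.1)
    have : l * x ≤ π/2 := by
      have := hx.2
      calc l * x ≤ l * d := by nlinarith
        _ ≤ l * (π/(2*l)) := by nlinarith
        _ = π/2 := by field_simp
    linarith [Real.pi_pos]
  have hg_pos : ∀ x ∈ Set.Ioc (0:ℝ) d, 0 < gb x := by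
    intro x hx
    rw [hgb]
    simp only
    exact div_pos (hsin_pos x hx) hl
  have hlx_le : ∀ x ∈ Set.Ioc (0:ℝ) d, l * x ≤ π/2 := by
    intro x hx
    calc l * x ≤ l * d := by nlinarith [hx.2]
      _ ≤ l * (π/(2*l)) := by nlinarith
      _ = π/2 := by field_simp
  -- numeric auxiliary bounds
  have hA : l/(N*b) ≤ l^2/N := by
    rw [div_le_div_iff₀ (by positivity) hN0]
    nlinarith [mul_nonneg (mul_pos hl hN0).le (show (0:ℝ) ≤ l*b - 1 by linarith)]
  have h5 : (n:ℝ)/N ≤ 1/5 := by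
    rw [div_le_div_iff₀ hN0 (by norm_num)]
    linarith
  have h15 : 1/N ≤ 1/15 := by
    rw [div_le_div_iff₀ hN0 (by norm_num)]
    linarith
  have h225 : 1/N^2 ≤ 1/225 := by
    rw [div_le_div_iff₀ (by positivity) (by norm_num)]
    nlinarith
  have hB : ∀ x ∈ Set.Icc (0:ℝ) d, l*x/(N*b) ≤ l/N := by
    intro x hx
    rw [div_le_div_iff₀ (by positivity) hN0]
    nlinarith [mul_nonneg (mul_pos hl hN0).le (show (0:ℝ) ≤ b - x by linarith [hx.2, hdb])]
  have hB0 : ∀ x ∈ Set.Icc (0:ℝ) d, 0 ≤ l*x/(N*b) := by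
    intro x hx
    have := hx.1
    positivity
  have hQpos : ∀ x : ℝ, 0 < l/(N*b) + (l*x/(N*b))^2 := by
    intro x
    have : (0:ℝ) < l/(N*b) := by positivity
    nlinarith [sq_nonneg (l*x/(N*b))]
  have hQle : ∀ x ∈ Set.Icc (0:ℝ) d, l/(N*b) + (l*x/(N*b))^2 ≤ (1/N + 1/N^2) * l^2 := by
    intro x hx
    have h1 := hB x hx
    have h0 := hB0 x hx
    have hsq : (l*x/(N*b))^2 ≤ (1/N^2)*l^2 := by
      calc (l*x/(N*b))^2 ≤ (l/N)^2 := by exact pow_le_pow_left₀ h0 h1 2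
        _ = (1/N^2)*l^2 := by ring
    calc l/(N*b) + (l*x/(N*b))^2 ≤ l^2/N + (1/N^2)*l^2 := add_le_add hA hsq
      _ = (1/N + 1/N^2) * l^2 := by ring
  -- derivative bounds on [0,d]
  have hD0 : ∀ x ∈ Set.Icc (0:ℝ) d, 0 ≤ deriv ub x := by
    intro x hx
    rw [hud']
    have := hx.1
    have := (hu_pos x).le
    positivity
  have hDle : ∀ x ∈ Set.Icc (0:ℝ) d, deriv ub x ≤ 1/N := by
    intro x hx
    rw [hud']
    simp only
    calc l*x/(N*b) * ub x ≤ (l/N) * (1/l) :=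
          mul_le_mul (hB x hx) (hub_le x hx) (hu_pos x).le (by positivity)
      _ = 1/N := by field_simp
  -- product bound: 0 ≤ P ≤ l/(N*b) for x ∈ (0,d]
  have hP0 : ∀ x ∈ Set.Ioc (0:ℝ) d, 0 ≤ (l*x/(N*b)) * (l * Real.cos (l*x) / Real.sin (l*x)) := by
    intro x hx
    have hs := hsin_pos x hx
    have hc : 0 ≤ Real.cos (l*x) :=
      Real.cos_nonneg_of_mem_Icc ⟨by nlinarith [mul_pos hl hx.1, Real.pi_pos], hlx_le x hx⟩
    have hx0 := hx.1.le
    positivity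
  have hPle : ∀ x ∈ Set.Ioc (0:ℝ) d,
      (l*x/(N*b)) * (l * Real.cos (l*x) / Real.sin (l*x)) ≤ l^2/N := by
    intro x hx
    have hs := hsin_pos x hx
    have hkey := aux_tcos (l*x) (by nlinarith [hx.1]) (hlx_le x hx)
    have heq : (l*x/(N*b)) * (l * Real.cos (l*x) / Real.sin (l*x))
        = l * ((l*x) * Real.cos (l*x)) / ((N*b) * Real.sin (l*x)) := by ring
    rw [heq]
    calc l * ((l*x) * Real.cos (l*x)) / ((N*b) * Real.sin (l*x))
        ≤ l * Real.sin (l*x) / ((N*b) * Real.sin (l*x)) := by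
          gcongr
      _ = l / (N*b) := by
          rw [mul_comm (N*b) (Real.sin (l*x)), ← div_div, mul_div_assoc]
          rw [div_self (ne_of_gt hs)]
          ring
      _ ≤ l^2/N := hA

  -- gb''/gb = -l^2 on (0,d]
  have hgq : ∀ x ∈ Set.Ioc (0:ℝ) d, deriv (deriv gb) x / gb x = -l^2 := by
    intro x hx
    rw [hgdd' x]
    exact mul_div_cancel_right₀ _ (ne_of_gt (hg_pos x hx))
  -- 1/gb^2 - (gb'/gb)^2 = l^2 on (0,d]
  have hiq : ∀ x ∈ Set.Ioc (0:ℝ) d, 1/(gb x)^2 - (deriv gb x / gb x)^2 = l^2 := by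
    intro x hx
    have hs := hsin_pos x hx
    have hpy := Real.sin_sq_add_cos_sq (l*x)
    rw [hrgv x, hgb]
    simp only
    field_simp
    linear_combination (-1) * hpy
  -- numeric combinations
  have hA15 : l/(N*b) ≤ (1/15)*l^2 := by
    calc l/(N*b) ≤ l^2/N := hA
      _ = (1/N)*l^2 := by ring
      _ ≤ (1/15)*l^2 := mul_le_mul_of_nonneg_right h15 hl2.le
  have hmQ : ∀ x ∈ Set.Icc (0:ℝ) d,
      (m:ℝ) * (l/(N*b) + (l*x/(N*b))^2) ≤ (1/5 + 1/75)*l^2 := by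
    intro x hx
    have h75 : (n:ℝ)/N^2 ≤ 1/75 := by
      rw [div_le_div_iff₀ (by positivity) (by norm_num)]
      nlinarith [mul_le_mul_of_nonneg_right hN15 hN0.le]
    calc (m:ℝ) * (l/(N*b) + (l*x/(N*b))^2)
        ≤ (n:ℝ) * ((1/N + 1/N^2)*l^2) :=
          mul_le_mul hmn' (hQle x hx) (hQpos x).le (by positivity)
      _ = ((n:ℝ)/N)*l^2 + ((n:ℝ)/N^2)*l^2 := by ring
      _ ≤ (1/5)*l^2 + (1/75)*l^2 :=
          add_le_add (mul_le_mul_of_nonneg_right h5 hl2.le)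
            (mul_le_mul_of_nonneg_right h75 hl2.le)
      _ = (1/5 + 1/75)*l^2 := by ring
  have hmlNb : (m:ℝ)*(l/(N*b)) ≤ (1/5)*l^2 := by
    calc (m:ℝ)*(l/(N*b)) ≤ (n:ℝ)*(l^2/N) :=
          mul_le_mul hmn' hA (by positivity) (by positivity)
      _ = ((n:ℝ)/N)*l^2 := by ring
      _ ≤ (1/5)*l^2 := mul_le_mul_of_nonneg_right h5 hl2.le
  have hnlNb : ((n:ℝ)-1)*(l/(N*b)) ≤ (1/5)*l^2 := by
    calc ((n:ℝ)-1)*(l/(N*b)) ≤ ((n:ℝ)-1)*(l^2/N) :=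
          mul_le_mul_of_nonneg_left hA (by linarith)
      _ ≤ (n:ℝ)*(l^2/N) := mul_le_mul_of_nonneg_right (by linarith) (by positivity)
      _ = ((n:ℝ)/N)*l^2 := by ring
      _ ≤ (1/5)*l^2 := mul_le_mul_of_nonneg_right h5 hl2.le
  have hn1l2 : 2*l^2 ≤ ((n:ℝ)-1)*l^2 :=
    mul_le_mul_of_nonneg_right (by linarith) hl2.le
  -- product bound in goal form
  have hCprod : ∀ x ∈ Set.Ioc (0:ℝ) d,
      0 ≤ (deriv ub x / ub x) * (deriv gb x / gb x) ∧
      (deriv ub x / ub x) * (deriv gb x / gb x) ≤ l^2/N := by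
    intro x hx
    rw [hruv x, hrgv x]
    exact ⟨hP0 x hx, hPle x hx⟩
  have hCn : ∀ x ∈ Set.Ioc (0:ℝ) d,
      ((n:ℝ)-1) * (deriv ub x / ub x) * (deriv gb x / gb x) ≤ (1/5)*l^2 := by
    intro x hx
    obtain ⟨hc0, hc1⟩ := hCprod x hx
    calc ((n:ℝ)-1) * (deriv ub x / ub x) * (deriv gb x / gb x)
        = ((n:ℝ)-1) * ((deriv ub x / ub x) * (deriv gb x / gb x)) := by ring
      _ ≤ ((n:ℝ)-1) * (l^2/N) := mul_le_mul_of_nonneg_left hc1 (by linarith)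
      _ ≤ (n:ℝ) * (l^2/N) := mul_le_mul_of_nonneg_right (by linarith) (by positivity)
      _ = ((n:ℝ)/N)*l^2 := by ring
      _ ≤ (1/5)*l^2 := mul_le_mul_of_nonneg_right h5 hl2.le
  have hCm : ∀ x ∈ Set.Ioc (0:ℝ) d,
      (m:ℝ) * (deriv ub x / ub x) * (deriv gb x / gb x) ≤ (1/5)*l^2 := by
    intro x hx
    obtain ⟨hc0, hc1⟩ := hCprod x hx
    calc (m:ℝ) * (deriv ub x / ub x) * (deriv gb x / gb x)
        = (m:ℝ) * ((deriv ub x / ub x) * (deriv gb x / gb x)) := by ring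
      _ ≤ (n:ℝ) * (l^2/N) := mul_le_mul hmn' hc1 hc0 (by positivity)
      _ = ((n:ℝ)/N)*l^2 := by ring
      _ ≤ (1/5)*l^2 := mul_le_mul_of_nonneg_right h5 hl2.le
  -- first-term lower bound for (ii)
  have hfirst : ∀ x ∈ Set.Icc (0:ℝ) d,
      (1 - 1/225)*l^2 ≤ ((m:ℝ)-1)*(1 - (deriv ub x)^2)/(ub x)^2 := by
    intro x hx
    have hD := hDle x hx
    have hD0' := hD0 x hx
    have hDsq : (deriv ub x)^2 ≤ 1/225 := by
      calc (deriv ub x)^2 ≤ (1/N)^2 := pow_le_pow_left₀ hD0' hD 2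
        _ = 1/N^2 := by ring
        _ ≤ 1/225 := h225
    have h1 : (1:ℝ) - 1/225 ≤ ((m:ℝ)-1)*(1 - (deriv ub x)^2) := by
      nlinarith [mul_nonneg (show (0:ℝ) ≤ (m:ℝ)-2 by linarith)
        (show (0:ℝ) ≤ 1-(deriv ub x)^2 by nlinarith [hDsq])]
    have hu2 : (ub x)^2 ≤ 1/l^2 := by
      calc (ub x)^2 ≤ (1/l)^2 := pow_le_pow_left₀ (hu_pos x).le (hub_le x hx) 2
        _ = 1/l^2 := by ring
    have hinv : l^2 ≤ 1/(ub x)^2 := by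
      rw [le_div_iff₀ (pow_pos (hu_pos x) 2)]
      calc l^2 * (ub x)^2 ≤ l^2 * (1/l^2) := mul_le_mul_of_nonneg_left hu2 hl2.le
        _ = 1 := by field_simp
    calc (1 - 1/225)*l^2 ≤ (((m:ℝ)-1)*(1 - (deriv ub x)^2)) * l^2 :=
          mul_le_mul_of_nonneg_right h1 hl2.le
      _ ≤ (((m:ℝ)-1)*(1 - (deriv ub x)^2)) * (1/(ub x)^2) :=
          mul_le_mul_of_nonneg_left hinv (by linarith)
      _ = ((m:ℝ)-1)*(1 - (deriv ub x)^2)/(ub x)^2 := by ring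
  -- second-term upper bound (goal-form)
  have hQ15 : ∀ x ∈ Set.Icc (0:ℝ) d,
      deriv (deriv ub) x / ub x ≤ (1/15 + 1/225)*l^2 := by
    intro x hx
    rw [hcanc x]
    calc l/(N*b) + (l*x/(N*b))^2 ≤ (1/N + 1/N^2)*l^2 := hQle x hx
      _ ≤ (1/15 + 1/225)*l^2 := by
          apply mul_le_mul_of_nonneg_right _ hl2.le
          linarith
  have hmT : ∀ x ∈ Set.Icc (0:ℝ) d,
      (m:ℝ) * (deriv (deriv ub) x / ub x) ≤ (1/5 + 1/75)*l^2 := by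
    intro x hx
    rw [hcanc x]
    exact hmQ x hx
  have hIoo : Set.Ioo (0:ℝ) d ∈ nhdsWithin (0:ℝ) (Set.Ioi 0) :=
    Ioo_mem_nhdsGT_of_mem ⟨le_refl 0, hd⟩
  have hcont_u : Continuous ub := by rw [hub]; fun_prop
  have hle : nhdsWithin (0:ℝ) (Set.Ioi 0) ≤ nhds 0 := nhdsWithin_le_nhds
  refine ⟨?_, ?_, ?_, ?_, ?_, ?_⟩
  · -- pointwise positivity on (0,d]
    intro x hx
    have hxI : x ∈ Set.Icc (0:ℝ) d := ⟨hx.1.le, hx.2⟩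
    refine ⟨?_, ?_, ?_⟩
    · rw [hgq x hx]
      have := hmT x hxI
      nlinarith [hn1l2, hl2]
    · have h1 := hfirst x hxI
      have h2 := hQ15 x hxI
      have h3 := hCn x hx
      linarith
    · rw [hiq x hx, hgq x hx]
      have h3 := hCm x hx
      have : 1*l^2 ≤ ((n:ℝ)-2)*l^2 := mul_le_mul_of_nonneg_right (by linarith) hl2.le
      linarith
  · -- limit (i)
    refine ⟨-(m:ℝ)*(l/(N*b)) + ((n:ℝ)-1)*l^2, ?_, ?_⟩
    · have := hmQ 0 ⟨le_refl 0, hd.le⟩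
      nlinarith [hn1l2, hl2]
    · have hT : Tendsto (fun x : ℝ => -(m:ℝ)*(l/(N*b) + (l*x/(N*b))^2) + ((n:ℝ)-1)*l^2)
          (nhdsWithin 0 (Set.Ioi 0)) (nhds (-(m:ℝ)*(l/(N*b)) + ((n:ℝ)-1)*l^2)) := by
        have hc : Continuous (fun x : ℝ => -(m:ℝ)*(l/(N*b) + (l*x/(N*b))^2) + ((n:ℝ)-1)*l^2) := by
          fun_prop
        have h0 : -(m:ℝ)*(l/(N*b) + (l*0/(N*b))^2) + ((n:ℝ)-1)*l^2
            = -(m:ℝ)*(l/(N*b)) + ((n:ℝ)-1)*l^2 := by norm_num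
        have h2 := (hc.tendsto 0).mono_left hle
        beta_reduce at h2
        rwa [h0] at h2
      apply hT.congr'
      filter_upwards [hIoo] with x hx
      have hx' : x ∈ Set.Ioc (0:ℝ) d := ⟨hx.1, hx.2.le⟩
      rw [hcanc x, hgq x hx']
      ring
  · -- limit (ii)
    refine ⟨((m:ℝ)-1)/(ub 0)^2 - l/(N*b) - ((n:ℝ)-1)*(l/(N*b)), ?_, ?_⟩
    · have hu2 : (ub 0)^2 ≤ 1/l^2 := by
        calc (ub 0)^2 ≤ (1/l)^2 :=
              pow_le_pow_left₀ (hu_pos 0).le (hub_le 0 ⟨le_refl 0, hd.le⟩) 2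
          _ = 1/l^2 := by ring
      have hinv : l^2 ≤ 1/(ub 0)^2 := by
        rw [le_div_iff₀ (pow_pos (hu_pos 0) 2)]
        calc l^2 * (ub 0)^2 ≤ l^2 * (1/l^2) := mul_le_mul_of_nonneg_left hu2 hl2.le
          _ = 1 := by field_simp
      have hmono : 1*(1/(ub 0)^2) ≤ ((m:ℝ)-1)*(1/(ub 0)^2) :=
        mul_le_mul_of_nonneg_right (by linarith) (by positivity)
      have hrw : ((m:ℝ)-1)/(ub 0)^2 = ((m:ℝ)-1)*(1/(ub 0)^2) := by ring
      rw [hrw]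
      linarith [hA15, hnlNb, hl2]
    · have hT1 : Tendsto (fun x : ℝ => ((m:ℝ)-1)*(1 - (l*x/(N*b) * ub x)^2))
          (nhdsWithin 0 (Set.Ioi 0)) (nhds (((m:ℝ)-1)*(1 - (l*0/(N*b) * ub 0)^2))) :=
        ((by fun_prop : ContinuousAt (fun x : ℝ => ((m:ℝ)-1)*(1 - (l*x/(N*b) * ub x)^2)) 0).tendsto).mono_left hle
      have hT2 : Tendsto (fun x : ℝ => (ub x)^2)
          (nhdsWithin 0 (Set.Ioi 0)) (nhds ((ub 0)^2)) :=
        ((by fun_prop : ContinuousAt (fun x : ℝ => (ub x)^2) 0).tendsto).mono_left hle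
      have hTdiv := hT1.div hT2 (pow_ne_zero 2 (ne_of_gt (hu_pos 0)))
      have hT3 : Tendsto (fun x : ℝ => l/(N*b) + (l*x/(N*b))^2)
          (nhdsWithin 0 (Set.Ioi 0)) (nhds (l/(N*b) + (l*0/(N*b))^2)) :=
        ((by fun_prop : ContinuousAt (fun x : ℝ => l/(N*b) + (l*x/(N*b))^2) 0).tendsto).mono_left hle
      have hTcot := (aux_xcot l hl).const_mul (((n:ℝ)-1)*(l^2/(N*b)))
      have htotal := (hTdiv.sub hT3).sub hTcot
      simp only [Pi.div_apply] at htotal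
      have hval : (((m:ℝ)-1)*(1 - (l*0/(N*b) * ub 0)^2)/(ub 0)^2 - (l/(N*b) + (l*0/(N*b))^2))
          - ((n:ℝ)-1)*(l^2/(N*b)) * (1/l)
          = ((m:ℝ)-1)/(ub 0)^2 - l/(N*b) - ((n:ℝ)-1)*(l/(N*b)) := by
        field_simp
        ring
      rw [hval] at htotal
      apply htotal.congr
      intro x
      rw [hcanc x, hruv x, hrgv x, hud']
      beta_reduce
      ring
  · -- limit (iii)
    refine ⟨((n:ℝ)-1)*l^2 - (m:ℝ)*(l/(N*b)), ?_, ?_⟩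
    · linarith [hmlNb, hn1l2, hl2]
    · have hTcot := (aux_xcot l hl).const_mul ((m:ℝ)*(l^2/(N*b)))
      have htotal := (tendsto_const_nhds
        (x := ((n:ℝ)-2)*l^2 + l^2) (f := nhdsWithin (0:ℝ) (Set.Ioi 0))).sub hTcot
      have hval : (((n:ℝ)-2)*l^2 + l^2) - (m:ℝ)*(l^2/(N*b)) * (1/l)
          = ((n:ℝ)-1)*l^2 - (m:ℝ)*(l/(N*b)) := by
        field_simp
        ring
      rw [hval] at htotal
      apply htotal.congr'
      filter_upwards [hIoo] with x hx
      have hx' : x ∈ Set.Ioc (0:ℝ) d := ⟨hx.1, hx.2.le⟩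
      rw [hiq x hx', hgq x hx', hruv x, hrgv x]
      ring
  · -- auxiliary bounds on [0,d]
    intro x hx
    refine ⟨?_, ?_, hD0 x hx, hDle x hx, hub_le x hx⟩
    · rw [hcanc x]; exact hQpos x
    · rw [hcanc x]; exact hQle x hx
  · exact hgq
end

section
/- Let m, n be integers with n ≥ m ≥ 2, let 0 < γ < 1, and let N be a real number with 1/N + 1/N² < γ(1-γ)/8. Let l > 0, b ∈ [1/l, 2/l], A > 0, B ≤ 0, and d ∈ (0, b) such that A·x^γ + B > 0 for all x ∈ [d, b]. Suppose ū is a positive twice-differentiable function on [d, b] with 0 < ū''(x)/ū(x) ≤ (1/N + 1/N²)·l², and set ḡ(x) = A·x^γ + B. Then -m·ū''(x)/ū(x) - (n-1)·ḡ''(x)/ḡ(x) > 0 for all x ∈ [d, b]. -/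
open Real

/-- positivity of `Ric(T,T)` on the middle interval `[d,b]` of the pieces
`P_i`: with `ḡ(x) = A x^γ + B > 0` and a positive twice-differentiable `ū` satisfying
`0 < ū''/ū ≤ (1/N + 1/N²) l²`, one has `-m ū''/ū - (n-1) ḡ''/ḡ > 0` on `[d,b]`,
provided `1/N + 1/N² < γ(1-γ)/8`. -/
theorem statement_17 (m n : ℕ) (hm : 2 ≤ m) (hmn : m ≤ n)
    (γ N l b A B d : ℝ) (ub gb : ℝ → ℝ)
    (hγ : 0 < γ) (hγ' : γ < 1)
    (hNγ : 1/N + 1/N^2 < γ * (1 - γ) / 8)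
    (hl : 0 < l) (hb : b ∈ Set.Icc (1/l) (2/l))
    (hA : 0 < A) (hB : B ≤ 0)
    (hd : d ∈ Set.Ioo 0 b)
    (hgpos : ∀ x ∈ Set.Icc d b, 0 < A * x ^ γ + B)
    (hgb : gb = fun x => A * x ^ γ + B)
    (hubsmooth : ContDiffOn ℝ 2 ub (Set.Icc d b))
    (hubpos : ∀ x ∈ Set.Icc d b, 0 < ub x)
    (hub : ∀ x ∈ Set.Icc d b,
      0 < deriv (deriv ub) x / ub x ∧
      deriv (deriv ub) x / ub x ≤ (1/N + 1/N^2) * l^2) :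
    ∀ x ∈ Set.Icc d b,
      -(m : ℝ) * (deriv (deriv ub) x / ub x)
        - ((n : ℝ) - 1) * (deriv (deriv gb) x / gb x) > 0 := by
  subst hgb
  intro x hx
  obtain ⟨hxd, hxb⟩ := hx
  have hd0 : 0 < d := hd.1
  have hx0 : 0 < x := lt_of_lt_of_le hd0 hxd
  -- first derivative of gb on Ioi 0
  have hderiv1 : ∀ y ∈ Set.Ioi (0:ℝ),
      deriv (fun x => A * x ^ γ + B) y = A * γ * y ^ (γ - 1) := by
    intro y hy
    have h : HasDerivAt (fun x : ℝ => A * x ^ γ + B) (A * (γ * y ^ (γ - 1))) y :=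
      ((Real.hasDerivAt_rpow_const (Or.inl (ne_of_gt hy))).const_mul A).add_const B
    rw [h.deriv]; ring
  have hEq : deriv (fun x => A * x ^ γ + B) =ᶠ[nhds x] fun y => A * γ * y ^ (γ - 1) := by
    filter_upwards [Ioi_mem_nhds hx0] with y hy using hderiv1 y hy
  have hderiv2 : deriv (deriv (fun x => A * x ^ γ + B)) x = A * γ * (γ - 1) * x ^ (γ - 2) := by
    rw [hEq.deriv_eq]
    have h : HasDerivAt (fun y : ℝ => A * γ * y ^ (γ - 1))
        (A * γ * ((γ - 1) * x ^ (γ - 1 - 1))) x :=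
      (Real.hasDerivAt_rpow_const (Or.inl (ne_of_gt hx0))).const_mul (A * γ)
    rw [h.deriv]
    have : γ - 1 - 1 = γ - 2 := by ring
    rw [this]; ring
  have hg : 0 < A * x ^ γ + B := hgpos x ⟨hxd, hxb⟩
  obtain ⟨hu1, hu2⟩ := hub x ⟨hxd, hxb⟩
  -- x^(γ-2) * x^2 = x^γ
  have hxg : x ^ (γ - 2) * x ^ 2 = x ^ γ := by
    rw [show (x:ℝ) ^ 2 = x ^ (2:ℝ) by
        rw [← Real.rpow_natCast x 2]; norm_num,
      ← Real.rpow_add hx0]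
    norm_num
  have hxγ : 0 < x ^ γ := Real.rpow_pos_of_pos hx0 γ
  have hxγ2 : 0 < x ^ (γ - 2) := Real.rpow_pos_of_pos hx0 (γ - 2)
  have hgle : A * x ^ γ + B ≤ A * x ^ γ := by linarith
  have hγγ : 0 ≤ γ * (1 - γ) := by nlinarith
  -- lower bound on -g''/g
  have hq : γ * (1 - γ) / x ^ 2 ≤ A * γ * (1 - γ) * x ^ (γ - 2) / (A * x ^ γ + B) := by
    rw [div_le_div_iff₀ (by positivity) hg]
    calc γ * (1 - γ) * (A * x ^ γ + B) ≤ γ * (1 - γ) * (A * x ^ γ) :=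
          mul_le_mul_of_nonneg_left hgle hγγ
      _ = A * γ * (1 - γ) * x ^ (γ - 2) * x ^ 2 := by rw [← hxg]; ring
  -- x ≤ 2/l so 1/x^2 ≥ l^2/4
  have hx2 : x ^ 2 ≤ 4 / l ^ 2 := by
    have hxle : x ≤ 2 / l := le_trans hxb hb.2
    have h1 : x ^ 2 ≤ (2 / l) ^ 2 := pow_le_pow_left₀ (le_of_lt hx0) hxle 2
    calc x ^ 2 ≤ (2 / l) ^ 2 := h1
      _ = 4 / l ^ 2 := by field_simp; ring
  have hq2 : γ * (1 - γ) * l ^ 2 / 4 ≤ γ * (1 - γ) / x ^ 2 := by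
    rw [div_le_div_iff₀ (by norm_num) (by positivity)]
    have h4 : γ * (1 - γ) * l ^ 2 * (4 / l ^ 2) = γ * (1 - γ) * 4 := by
      field_simp
    nlinarith [mul_le_mul_of_nonneg_left hx2
      (mul_nonneg hγγ (sq_nonneg l))]
  -- bound on m*u
  have hmu : (m : ℝ) * (deriv (deriv ub) x / ub x) <
      (m : ℝ) * (γ * (1 - γ) / 8) * l ^ 2 := by
    have hm0 : (0:ℝ) < m := by positivity
    have h5 : deriv (deriv ub) x / ub x < γ * (1 - γ) / 8 * l ^ 2 :=
      lt_of_le_of_lt hu2 (mul_lt_mul_of_pos_right hNγ (by positivity))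
    nlinarith
  -- m ≤ 2(n-1)
  have h2 : (2:ℝ) ≤ (m:ℝ) := by exact_mod_cast hm
  have h3 : (m:ℝ) ≤ (n:ℝ) := by exact_mod_cast hmn
  have hmn2 : (m : ℝ) ≤ 2 * ((n : ℝ) - 1) := by linarith
  have hn1 : (0:ℝ) ≤ (n:ℝ) - 1 := by linarith
  -- assemble
  rw [hderiv2]
  have hkey : ((n:ℝ) - 1) * (γ * (1 - γ) * l ^ 2 / 4) ≤
      ((n:ℝ) - 1) * (A * γ * (1 - γ) * x ^ (γ - 2) / (A * x ^ γ + B)) :=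
    mul_le_mul_of_nonneg_left (le_trans hq2 hq) hn1
  have hineq : (m : ℝ) * (γ * (1 - γ) / 8) * l ^ 2 ≤
      ((n:ℝ) - 1) * (γ * (1 - γ) * l ^ 2 / 4) := by
    have h6 := mul_le_mul_of_nonneg_right hmn2
      (show (0:ℝ) ≤ γ * (1 - γ) * l ^ 2 / 8 by positivity)
    have e1 : (m : ℝ) * (γ * (1 - γ) / 8) * l ^ 2
        = (m:ℝ) * (γ * (1 - γ) * l ^ 2 / 8) := by ring
    have e2 : ((n:ℝ) - 1) * (γ * (1 - γ) * l ^ 2 / 4)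
        = 2 * ((n:ℝ) - 1) * (γ * (1 - γ) * l ^ 2 / 8) := by ring
    linarith
  have hfinal : A * γ * (γ - 1) * x ^ (γ - 2) / (A * x ^ γ + B) =
      -(A * γ * (1 - γ) * x ^ (γ - 2) / (A * x ^ γ + B)) := by ring
  rw [hfinal]
  linarith
end

section
/- Let m, n be integers with n ≥ m ≥ 2 and n ≥ 3, let 0 < γ < 1/4 and N ≥ 5n. Let l > 0, b ∈ [1/l, 2/l], A > 0, and d ∈ (0, b) with l·d ∈ (0, π/2) and d^{1-γ}·cos(l·d) = γ·A. Set B = sin(l·d)/l - A·d^γ and suppose B ≤ 0 and A·x^γ + B > 0 on [d, b]. Set ḡ(x) = A·x^γ + B on [d, b], and let ū be positive on [d, b] with ū'(x)/ū(x) = l·x/(Nb). Then for every x ∈ [d, b]: (n-2)·(1/ḡ(x)² - (ḡ'(x)/ḡ(x))²) - ḡ''(x)/ḡ(x) - m·(ū'(x)/ū(x))·(ḡ'(x)/ḡ(x)) > 0. In the course of the proof, ḡ'(x) = γ·A·x^{γ-1} ≤ cos(l·d) < 1 on [d, b]. -/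
open Real

/-- positivity of `Ric(Σ,Σ)` on the middle interval `[d,b]` of the pieces
`P_i`: with `ḡ(x) = A x^γ + B` (where `d^{1-γ} cos(l d) = γ A`,
`B = sin(l d)/l - A d^γ ≤ 0`, `A x^γ + B > 0` on `[d,b]`) and `ū > 0` satisfying
`ū'/ū = l x/(N b)`, one has
`(n-2)(1/ḡ² - (ḡ'/ḡ)²) - ḡ''/ḡ - m (ū'/ū)(ḡ'/ḡ) > 0` on `[d,b]`;
moreover `ḡ'(x) = γ A x^{γ-1} ≤ cos(l d) < 1` on `[d,b]`. -/
theorem statement_18 (m n : ℕ) (hm : 2 ≤ m) (hmn : m ≤ n) (hn : 3 ≤ n)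
    (γ N l b A B d : ℝ) (ub gb : ℝ → ℝ)
    (hγ : 0 < γ) (hγ' : γ < 1/4)
    (hN : 5 * (n : ℝ) ≤ N)
    (hl : 0 < l) (hb : b ∈ Set.Icc (1/l) (2/l))
    (hA : 0 < A)
    (hd : d ∈ Set.Ioo 0 b) (hld : l * d ∈ Set.Ioo 0 (π/2))
    (heq : d ^ (1 - γ) * Real.cos (l * d) = γ * A)
    (hB : B = Real.sin (l * d) / l - A * d ^ γ) (hB' : B ≤ 0)
    (hgpos : ∀ x ∈ Set.Icc d b, 0 < A * x ^ γ + B)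
    (hgb : gb = fun x => A * x ^ γ + B)
    (hubpos : ∀ x ∈ Set.Icc d b, 0 < ub x)
    (hub : ∀ x ∈ Set.Icc d b, HasDerivAt ub ((l * x / (N * b)) * ub x) x) :
    ∀ x ∈ Set.Icc d b,
      (((n : ℝ) - 2) * (1 / (gb x)^2 - (deriv gb x / gb x)^2)
        - deriv (deriv gb) x / gb x
        - (m : ℝ) * (deriv ub x / ub x) * (deriv gb x / gb x) > 0) ∧
      deriv gb x = γ * A * x ^ (γ - 1) ∧
      γ * A * x ^ (γ - 1) ≤ Real.cos (l * d) ∧ Real.cos (l * d) < 1 := by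
  subst hgb
  intro x hx
  have hd0 : 0 < d := hd.1
  have hx0 : 0 < x := lt_of_lt_of_le hd0 hx.1
  have hb0 : 0 < b := lt_trans hd0 hd.2
  have hn3 : (3:ℝ) ≤ (n:ℝ) := by exact_mod_cast hn
  have hN0 : 0 < N := by linarith
  have hmn' : (m:ℝ) ≤ (n:ℝ) := by exact_mod_cast hmn
  have hlb : l * b ≤ 2 := by
    have := hb.2
    rw [le_div_iff₀ hl] at this
    linarith
  -- first derivative
  have hderiv1 : ∀ y : ℝ, 0 < y →
      HasDerivAt (fun z => A * z ^ γ + B) (γ * A * y ^ (γ - 1)) y := by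
    intro y hy
    have h := ((Real.hasDerivAt_rpow_const (x := y) (p := γ)
      (Or.inl hy.ne')).const_mul A).add_const B
    rw [show γ * A * y ^ (γ - 1) = A * (γ * y ^ (γ - 1)) by ring]
    exact h
  have hd1 : deriv (fun z => A * z ^ γ + B) x = γ * A * x ^ (γ - 1) :=
    (hderiv1 x hx0).deriv
  -- second derivative
  have hev : deriv (fun z => A * z ^ γ + B) =ᶠ[nhds x]
      fun y => γ * A * y ^ (γ - 1) := by
    filter_upwards [eventually_gt_nhds hx0] with y hy using (hderiv1 y hy).deriv
  have hd2 : deriv (deriv (fun z => A * z ^ γ + B)) x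
      = γ * A * ((γ - 1) * x ^ (γ - 2)) := by
    rw [hev.deriv_eq]
    have h := ((Real.hasDerivAt_rpow_const (x := x) (p := γ - 1)
      (Or.inl hx0.ne')).const_mul (γ * A))
    rw [show γ - 1 - 1 = γ - 2 by ring] at h
    exact h.deriv
  have hub0 : ub x ≠ 0 := (hubpos x hx).ne'
  have hdu : deriv ub x = l * x / (N * b) * ub x := (hub x hx).deriv
  -- cos facts
  have hc0 : 0 < Real.cos (l * d) := by
    apply Real.cos_pos_of_mem_Ioo
    constructor
    · have := Real.pi_pos; linarith [hld.1]
    · exact hld.2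
  have hsin : 0 < Real.sin (l * d) := by
    apply Real.sin_pos_of_pos_of_lt_pi hld.1
    have := Real.pi_pos; linarith [hld.2]
  have hc1 : Real.cos (l * d) < 1 := by
    nlinarith [Real.sin_sq_add_cos_sq (l * d)]
  -- g' ≤ cos(l d)
  have hgple : γ * A * x ^ (γ - 1) ≤ Real.cos (l * d) := by
    rw [← heq]
    have hxd : x ^ (γ - 1) ≤ d ^ (γ - 1) :=
      Real.rpow_le_rpow_of_nonpos hd0 hx.1 (by linarith)
    have hpos : 0 ≤ d ^ (1 - γ) * Real.cos (l * d) :=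
      mul_nonneg (Real.rpow_nonneg hd0.le _) hc0.le
    calc d ^ (1 - γ) * Real.cos (l * d) * x ^ (γ - 1)
        ≤ d ^ (1 - γ) * Real.cos (l * d) * d ^ (γ - 1) :=
          mul_le_mul_of_nonneg_left hxd hpos
      _ = Real.cos (l * d) * (d ^ (1 - γ) * d ^ (γ - 1)) := by ring
      _ = Real.cos (l * d) := by
          rw [← Real.rpow_add hd0, show (1 - γ) + (γ - 1) = 0 by ring,
            Real.rpow_zero, mul_one]
  have hg : 0 < A * x ^ γ + B := hgpos x hx
  have hgp0 : 0 < γ * A * x ^ (γ - 1) :=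
    mul_pos (mul_pos hγ hA) (Real.rpow_pos_of_pos hx0 _)
  have hP : 0 < γ * A * x ^ (γ - 2) :=
    mul_pos (mul_pos hγ hA) (Real.rpow_pos_of_pos hx0 _)
  have hxsplit : x ^ (γ - 1) = x ^ (γ - 2) * x := by
    rw [show γ - 1 = (γ - 2) + 1 by ring, Real.rpow_add hx0, Real.rpow_one]
  have hQ : (m:ℝ) * l * x ^ 2 / (N * b) ≤ 2 / 5 := by
    rw [div_le_iff₀ (by positivity)]
    have hxb : x ≤ b := hx.2
    have hx2 : x ^ 2 ≤ b ^ 2 := by nlinarith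
    have h1 : (m:ℝ) * l * x ^ 2 ≤ (n:ℝ) * l * x ^ 2 :=
      mul_le_mul_of_nonneg_right (mul_le_mul_of_nonneg_right hmn' hl.le) (sq_nonneg x)
    have h1' : (n:ℝ) * l * x ^ 2 ≤ (n:ℝ) * l * b ^ 2 :=
      mul_le_mul_of_nonneg_left hx2 (by positivity)
    have ha : (n:ℝ) * (l * b) * b ≤ (n:ℝ) * 2 * b :=
      mul_le_mul_of_nonneg_right
        (mul_le_mul_of_nonneg_left hlb (by positivity)) hb0.le
    have hb5 : 5 * (n:ℝ) * b ≤ N * b := mul_le_mul_of_nonneg_right hN hb0.le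
    have h2 : (n:ℝ) * l * b ^ 2 ≤ 2 / 5 * (N * b) := by
      have e : (n:ℝ) * l * b ^ 2 = (n:ℝ) * (l * b) * b := by ring
      rw [e]
      have : (n:ℝ) * 2 * b ≤ 2 / 5 * (N * b) := by linear_combination (2/5) * hb5
      linarith
    linarith
  have hkey : (m:ℝ) * (l * x / (N * b)) * (γ * A * x ^ (γ - 1))
      < -(γ * A * ((γ - 1) * x ^ (γ - 2))) := by
    have e1 : (m:ℝ) * (l * x / (N * b)) * (γ * A * x ^ (γ - 1))
        = (γ * A * x ^ (γ - 2)) * ((m:ℝ) * l * x ^ 2 / (N * b)) := by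
      rw [hxsplit]; ring
    have e2 : -(γ * A * ((γ - 1) * x ^ (γ - 2)))
        = (γ * A * x ^ (γ - 2)) * (1 - γ) := by ring
    rw [e1, e2]
    exact mul_lt_mul_of_pos_left (by linarith) hP
  refine ⟨?_, hd1, hgple, hc1⟩
  rw [hd1, hd2, hdu, mul_div_cancel_right₀ _ hub0]
  have h1 : (0:ℝ) ≤ ((n:ℝ) - 2) * (1 / (A * x ^ γ + B) ^ 2
      - (γ * A * x ^ (γ - 1) / (A * x ^ γ + B)) ^ 2) := by
    apply mul_nonneg (by linarith)
    have e : 1 / (A * x ^ γ + B) ^ 2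
        - (γ * A * x ^ (γ - 1) / (A * x ^ γ + B)) ^ 2
        = (1 - (γ * A * x ^ (γ - 1)) ^ 2) / (A * x ^ γ + B) ^ 2 := by
      field_simp
    rw [e]
    apply div_nonneg _ (by positivity)
    have ht : γ * A * x ^ (γ - 1) ≤ 1 := hgple.trans hc1.le
    have ht2 : (γ * A * x ^ (γ - 1)) ^ 2 ≤ 1 ^ 2 :=
      pow_le_pow_left₀ hgp0.le ht 2
    rw [one_pow] at ht2
    linarith
  have h2 : 0 < -(γ * A * ((γ - 1) * x ^ (γ - 2)) / (A * x ^ γ + B))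
      - (m:ℝ) * (l * x / (N * b)) * (γ * A * x ^ (γ - 1) / (A * x ^ γ + B)) := by
    have e : -(γ * A * ((γ - 1) * x ^ (γ - 2)) / (A * x ^ γ + B))
        - (m:ℝ) * (l * x / (N * b)) * (γ * A * x ^ (γ - 1) / (A * x ^ γ + B))
        = (-(γ * A * ((γ - 1) * x ^ (γ - 2)))
          - (m:ℝ) * (l * x / (N * b)) * (γ * A * x ^ (γ - 1))) / (A * x ^ γ + B) := by
      ring
    rw [e]
    exact div_pos (by linarith) hg
  linarith
end
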